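/- arXiv:1709.02846 — 4 statements merged into one kernel-verified Lean document; each statement's English description precedes it below -/
import Mathlib

section
/- Let Γ be the dual group of an LCA group G, H a closed subgroup of G with annihilator Λ, π : Γ → Γ/Λ the quotient map, and ν a complex regular Borel measure on Γ such that |ν|π⁻¹ is discrete. If |ν| is concentrated on a transversal (there is a Borel set D with |ν|(Γ \ D)=0 and D ∩ (λ+D)=∅ for all λ ∈ Λ \ {0}) and ∫_Γ ⟨γ, y⟩ dν(γ) = 0 for all y ∈ H, then ν = 0. -/
open MeasureTheory Set

noncomputable section

variable {G : Type*} [CommGroup G] [TopologicalSpace G] [IsTopologicalGroup G]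
  [LocallyCompactSpace G] [T2Space G]

/-- The annihilator of a subgroup `H ≤ G` in the Pontryagin dual of `G`:
all characters that are trivial on `H`. -/
def annihilator (H : Subgroup G) : Subgroup (PontryaginDual G) where
  carrier := {γ : PontryaginDual G | ∀ y ∈ H, γ y = 1}
  mul_mem' := fun {a b} ha hb y hy => by
    show a y * b y = 1
    rw [ha y hy, hb y hy, one_mul]
  one_mem' := fun y hy => rfl
  inv_mem' := fun {a} ha y hy => by
    show (a y)⁻¹ = 1
    rw [ha y hy, inv_one]

/-- The trigonometric `H`-polynomials on the dual group: finite sums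
`γ ↦ Σ aₖ ⟨γ, yₖ⟩` with `aₖ ∈ ℂ`, `yₖ ∈ H`. -/
def trigPoly (H : Subgroup G) : Set (PontryaginDual G → ℂ) :=
  {p | ∃ (n : ℕ) (a : Fin n → ℂ) (y : Fin n → G), (∀ i, y i ∈ H) ∧
    p = fun γ => ∑ i, a i * ((γ (y i) : Circle) : ℂ)}

/-- A finite non-negative Borel measure is *regular* (in the sense of the paper). -/
def PaperRegular {X : Type*} [TopologicalSpace X] [MeasurableSpace X]
    (μ : Measure X) : Prop :=
  ∀ B : Set X, MeasurableSet B → ∀ ε : ENNReal, 0 < ε →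
    ∃ C U : Set X, IsCompact C ∧ IsOpen U ∧ C ⊆ B ∧ B ⊆ U ∧ μ (U \ C) < ε

/-- μ is concentrated on a transversal for Λ. -/
def ConcOnTransversal {Γ : Type*} [CommGroup Γ] [TopologicalSpace Γ] [MeasurableSpace Γ]
    (Λ : Subgroup Γ) (μ : Measure Γ) : Prop :=
  ∃ D : Set Γ, MeasurableSet D ∧ μ Dᶜ = 0 ∧
    ∀ l ∈ Λ, l ≠ (1 : Γ) → D ∩ ((fun t => l * t) '' D) = ∅

/-- A family `F` of functions is dense in `L^α(μ)`. -/
def DenseInLp {X : Type*} [MeasurableSpace X] (μ : Measure X) (α : ℝ)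
    (F : Set (X → ℂ)) : Prop :=
  ∀ g : X → ℂ, Measurable g → (∫⁻ x, (‖g x‖₊ : ENNReal) ^ α ∂μ) < ⊤ →
    ∀ ε : ENNReal, 0 < ε → ∃ p ∈ F, (∫⁻ x, (‖g x - p x‖₊ : ENNReal) ^ α ∂μ) < ε

/-- A measure is discrete if it vanishes off a countable set. -/
def IsDiscreteMeasure {X : Type*} [MeasurableSpace X] (μ : Measure X) : Prop :=
  ∃ S : Set X, S.Countable ∧ μ Sᶜ = 0

/-- Orthogonality: a nontrivial continuous character-like multiplicative function on a
compact group integrates to zero against a left-invariant probability measure. -/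
lemma integral_mulHom_eq_zero {K : Type*} [Group K] [TopologicalSpace K] [IsTopologicalGroup K]
    [CompactSpace K] [MeasurableSpace K] [BorelSpace K] (μ : MeasureTheory.Measure K)
    [IsFiniteMeasure μ] [μ.IsMulLeftInvariant] (g : K → ℂ) (hg : Continuous g)
    (hmul : ∀ a b, g (a * b) = g a * g b) (k₀ : K) (hk₀ : g k₀ ≠ 1) :
    ∫ k, g k ∂μ = 0 := by
  have h1 : ∫ k, g (k₀ * k) ∂μ = ∫ k, g k ∂μ := integral_mul_left_eq_self g k₀
  have h2 : ∫ k, g (k₀ * k) ∂μ = g k₀ * ∫ k, g k ∂μ := by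
    simp_rw [hmul]
    exact integral_const_mul _ _
  have h3 : (g k₀ - 1) * ∫ k, g k ∂μ = 0 := by
    rw [sub_mul, one_mul, ← h2, h1, sub_self]
  rcases mul_eq_zero.mp h3 with h | h
  · exact absurd (sub_eq_zero.mp h) hk₀
  · exact h

/-- Lemma 3.1: let ν = h·dm be a complex regular Borel measure on the dual
group Γ of G, given in polar form by its total variation m and a density h of modulus one.
If mπ⁻¹ is discrete, m is concentrated on a transversal for the annihilator Λ of H, and
∫ ⟨γ,y⟩ dν(γ) = 0 for all y ∈ H, then ν = 0 (equivalently m = 0). -/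
theorem vanishing_fourier_implies_zero_discrete
    (H : Subgroup G) (hH : IsClosed (H : Set G))
    [MeasurableSpace (PontryaginDual G)] [BorelSpace (PontryaginDual G)]
    (m : Measure (PontryaginDual G)) [IsFiniteMeasure m] (hreg : PaperRegular m)
    (h : PontryaginDual G → ℂ) (hmeas : Measurable h) (hnorm : ∀ᵐ γ ∂m, ‖h γ‖ = 1)
    (hdisc : IsDiscreteMeasure (m.map (QuotientGroup.mk (s := annihilator H))))
    (htrans : ConcOnTransversal (annihilator H) m)
    (hvanish : ∀ y ∈ H, (∫ γ : PontryaginDual G, ((γ y : Circle) : ℂ) * h γ ∂m) = 0) :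
    m = 0 := by
  classical
  obtain ⟨S, hScount, hSnull⟩ := hdisc
  obtain ⟨D, hDmeas, hDnull, hDtrans⟩ := htrans
  have hnorm1 : ∀ z : Circle, ‖(z : ℂ)‖ = 1 := fun z => by
    rw [Circle.norm_coe]
  have hevalc : ∀ y : G, Continuous fun γ : PontryaginDual G => γ y := fun y =>
    (continuous_eval_const (F := ContinuousMonoidHom G Circle) y)
  -- the annihilator is closed
  have hΛclosed : IsClosed ((annihilator H : Set (PontryaginDual G))) := by
    have hset : (annihilator H : Set (PontryaginDual G)) =
        ⋂ y ∈ H, {γ : PontryaginDual G | γ y = 1} := by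
      ext γ; simp only [Set.mem_iInter, Set.mem_setOf_eq]; rfl
    rw [hset]
    exact isClosed_biInter fun y hy =>
      isClosed_eq (hevalc y) continuous_const
  -- singletons in the quotient have measurable preimage
  have hsingle : ∀ q : PontryaginDual G ⧸ annihilator H,
      MeasurableSet ((QuotientGroup.mk (s := annihilator H)) ⁻¹' {q}) := by
    intro q
    obtain ⟨γ, rfl⟩ := QuotientGroup.mk_surjective q
    have hpre : (QuotientGroup.mk (s := annihilator H)) ⁻¹' {(γ : PontryaginDual G ⧸ annihilator H)}
        = (fun x : PontryaginDual G => x⁻¹ * γ) ⁻¹' (annihilator H : Set (PontryaginDual G)) := by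
      ext x
      simp only [Set.mem_preimage, Set.mem_singleton_iff, SetLike.mem_coe]
      exact QuotientGroup.eq
    rw [hpre]
    exact (hΛclosed.preimage (continuous_inv.mul continuous_const)).measurableSet
  have hSmeas : MeasurableSet S := by
    have hS : S = ⋃ q ∈ S, {q} := (Set.biUnion_of_singleton S).symm
    rw [hS]
    exact MeasurableSet.biUnion hScount fun q _ => hsingle q
  have hSnull' : m ((QuotientGroup.mk (s := annihilator H)) ⁻¹' S)ᶜ = 0 := by
    rw [← Set.preimage_compl]
    rw [Measure.map_apply QuotientGroup.measurable_coe hSmeas.compl] at hSnull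
    exact hSnull
  set C : Set (PontryaginDual G) := D ∩ (QuotientGroup.mk (s := annihilator H)) ⁻¹' S with hCdef
  have hCnull : m Cᶜ = 0 := by
    rw [hCdef, Set.compl_inter]
    exact measure_union_null hDnull hSnull'
  -- the quotient map is injective on D
  have hinj : Set.InjOn (QuotientGroup.mk (s := annihilator H)) D := by
    intro a ha b hb hab
    by_contra hne
    have hmem : a⁻¹ * b ∈ annihilator H := QuotientGroup.eq.mp hab
    have hne1 : a⁻¹ * b ≠ 1 := fun h1 => hne (inv_mul_eq_one.mp h1)
    have hmemb : b ∈ D ∩ ((fun t => (a⁻¹ * b) * t) '' D) :=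
      ⟨hb, ⟨a, ha, by show a⁻¹ * b * a = b; rw [mul_comm, mul_inv_cancel_left]⟩⟩
    rw [hDtrans _ hmem hne1] at hmemb
    exact hmemb
  have hCcount : C.Countable := by
    apply Set.countable_of_injective_of_countable_image
      (hinj.mono Set.inter_subset_left)
    apply hScount.mono
    rintro q ⟨γ, ⟨hD, hS⟩, rfl⟩
    exact hS
  haveI : Countable ↥C := hCcount.to_subtype
  -- at every atom, h has modulus one
  have hA : ∀ γ : PontryaginDual G, m {γ} ≠ 0 → ‖h γ‖ = 1 := by
    intro γ hγ
    by_contra hne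
    refine hγ (measure_mono_null ?_ (ae_iff.mp hnorm))
    intro x hx
    rw [Set.mem_singleton_iff] at hx
    subst hx
    exact hne
  -- coefficients
  set c : ↥C → ℂ := fun γ => (m {(γ : PontryaginDual G)}).toReal • h ↑γ with hcdef
  have hcnorm : ∀ γ : ↥C, ‖c γ‖ ≤ (m {(γ : PontryaginDual G)}).toReal := by
    intro γ
    by_cases hz : m {(γ : PontryaginDual G)} = 0
    · simp [hcdef, hz]
    · rw [hcdef]
      simp only []
      rw [norm_smul, Real.norm_eq_abs, abs_of_nonneg ENNReal.toReal_nonneg, hA _ hz, mul_one]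
  have htsum_meas : ∑' γ : ↥C, m {(γ : PontryaginDual G)} ≠ ⊤ := by
    have hts : (∑' γ : ↥C, m ((id : PontryaginDual G → PontryaginDual G) ⁻¹' {(γ : PontryaginDual G)}))
        = m ((id : PontryaginDual G → PontryaginDual G) ⁻¹' C) :=
      tsum_measure_preimage_singleton hCcount fun y _ => by
        simpa using measurableSet_singleton y
    simp only [Set.preimage_id] at hts
    rw [hts]
    exact measure_ne_top m C
  have hsummable : Summable (fun γ : ↥C => (m {(γ : PontryaginDual G)}).toReal) :=
    ENNReal.summable_toReal htsum_meas
  have hcsummable : Summable (fun γ : ↥C => ‖c γ‖) :=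
    hsummable.of_nonneg_of_le (fun _ => norm_nonneg _) hcnorm
  -- the vanishing integrals as vanishing sums
  have hrestrict : m.restrict C = m := by
    apply Measure.restrict_eq_self_of_ae_mem
    rw [ae_iff]
    exact hCnull
  have hexp : ∀ y : G, y ∈ H →
      ∑' γ : ↥C, (((γ : PontryaginDual G) y : Circle) : ℂ) * c γ = 0 := by
    intro y hy
    have hint : Integrable (fun γ : PontryaginDual G => ((γ y : Circle) : ℂ) * h γ) m := by
      refine ⟨(((continuous_subtype_val.comp (hevalc y)).measurable).mul
        hmeas).aestronglyMeasurable, ?_⟩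
      apply HasFiniteIntegral.of_bounded (C := 1)
      filter_upwards [hnorm] with γ hγ
      rw [norm_mul, hγ, mul_one, hnorm1]
    have h0 : (0 : ℂ) = ∫ γ, ((γ y : Circle) : ℂ) * h γ ∂m := (hvanish y hy).symm
    rw [← hrestrict] at h0
    rw [setIntegral_countable _ hCcount (by rw [IntegrableOn, hrestrict]; exact hint)] at h0
    rw [← h0.symm]
    apply tsum_congr
    intro γ
    rw [hcdef]
    simp only []
    rw [Complex.real_smul, Complex.real_smul, measureReal_def]
    ring
  -- the compact group of restrictions of characters to H
  set Φ : ↥H →* (PontryaginDual G → Circle) :=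
    { toFun := fun y γ => γ (y : G),
      map_one' := by ext γ; simp,
      map_mul' := by intro a b; ext γ; simp } with hΦdef
  set K : Subgroup (PontryaginDual G → Circle) := Φ.range.topologicalClosure with hKdef
  have hΦmem : ∀ y : ↥H, Φ y ∈ K :=
    fun y => Subgroup.le_topologicalClosure _ ⟨y, rfl⟩
  have hKclosed : IsClosed (K : Set (PontryaginDual G → Circle)) :=
    Subgroup.isClosed_topologicalClosure _
  haveI : CompactSpace ↥K := isCompact_iff_compactSpace.mp hKclosed.isCompact
  letI : MeasurableSpace ↥K := borel ↥K
  haveI : BorelSpace ↥K := ⟨rfl⟩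
  haveI : Nonempty ↥K := ⟨1⟩
  set K₀ : TopologicalSpace.PositiveCompacts ↥K :=
    ⟨⟨Set.univ, isCompact_univ⟩, by rw [interior_univ]; exact Set.univ_nonempty⟩ with hK₀def
  set μK := MeasureTheory.Measure.haarMeasure K₀ with hμKdef
  have hμKuniv : μK Set.univ = 1 := by
    have hself := MeasureTheory.Measure.haarMeasure_self (K₀ := K₀)
    exact hself
  haveI : IsProbabilityMeasure μK := ⟨hμKuniv⟩
  -- the function F
  set F : (PontryaginDual G → Circle) → ℂ := fun x => ∑' γ : ↥C, ((x ↑γ : Circle) : ℂ) * c γ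
    with hFdef
  have hFcont : Continuous F := by
    apply continuous_tsum (u := fun γ : ↥C => ‖c γ‖)
      (fun γ => (continuous_subtype_val.comp (continuous_apply
        ((γ : PontryaginDual G) : PontryaginDual G))).mul continuous_const) hcsummable
    intro γ x
    show ‖((x ↑γ : Circle) : ℂ) * c γ‖ ≤ ‖c γ‖
    rw [norm_mul]
    rw [hnorm1, one_mul]
  have hFzero : ∀ k : ↥K, F ↑k = 0 := by
    intro k
    have hsub : (K : Set (PontryaginDual G → Circle)) ⊆ F ⁻¹' {0} := by
      rw [hKdef, Subgroup.topologicalClosure_coe]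
      apply closure_minimal _ (isClosed_singleton.preimage hFcont)
      rintro x ⟨y, rfl⟩
      simp only [Set.mem_preimage, Set.mem_singleton_iff, hFdef]
      exact hexp (y : G) y.2
    simpa using hsub k.2
  -- every coefficient vanishes
  have hczero : ∀ γ₀ : ↥C, c γ₀ = 0 := by
    intro γ₀
    set g : ↥C → ↥K → ℂ := fun γ k =>
      ((((k : PontryaginDual G → Circle) ↑γ₀)⁻¹ *
        ((k : PontryaginDual G → Circle) ↑γ) : Circle) : ℂ) with hgdef
    have hgcont : ∀ γ : ↥C, Continuous (g γ) := by
      intro γ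
      apply continuous_subtype_val.comp
      apply Continuous.mul
      · exact ((continuous_apply ((γ₀ : PontryaginDual G))).comp
          continuous_subtype_val).inv
      · exact (continuous_apply ((γ : PontryaginDual G))).comp continuous_subtype_val
    have hgnorm : ∀ γ : ↥C, ∀ k : ↥K, ‖g γ k‖ = 1 := fun γ k => hnorm1 _
    have hgmul : ∀ γ : ↥C, ∀ a b : ↥K, g γ (a * b) = g γ a * g γ b := by
      intro γ a b
      rw [hgdef]
      simp only [Subgroup.coe_mul, Pi.mul_apply, mul_inv, Circle.coe_mul, Circle.coe_inv]
      ring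
    -- the left-hand side vanishes
    have hL : ∫ k : ↥K, ((((k : PontryaginDual G → Circle) ↑γ₀)⁻¹ : Circle) : ℂ) * F ↑k ∂μK
        = 0 := by
      have heq : (fun k : ↥K =>
          ((((k : PontryaginDual G → Circle) ↑γ₀)⁻¹ : Circle) : ℂ) * F ↑k) = fun _ => 0 := by
        funext k
        rw [hFzero k, mul_zero]
      rw [heq, integral_zero]
    -- expand as a sum of integrals
    have hR : ∫ k : ↥K, ((((k : PontryaginDual G → Circle) ↑γ₀)⁻¹ : Circle) : ℂ) * F ↑k ∂μK
        = ∑' γ : ↥C, ∫ k : ↥K, g γ k * c γ ∂μK := by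
      have heq : (fun k : ↥K =>
          ((((k : PontryaginDual G → Circle) ↑γ₀)⁻¹ : Circle) : ℂ) * F ↑k)
          = fun k : ↥K => ∑' γ : ↥C, g γ k * c γ := by
        funext k
        rw [hFdef]
        simp only []
        rw [← tsum_mul_left]
        apply tsum_congr
        intro γ
        rw [hgdef]
        simp only [Circle.coe_mul]
        ring
      rw [heq]
      apply integral_tsum
      · intro γ
        exact (((hgcont γ).mul continuous_const).measurable).aestronglyMeasurable
      · have hsummand : ∀ γ : ↥C, ∫⁻ k : ↥K, ‖g γ k * c γ‖₊ ∂μK = (‖c γ‖₊ : ENNReal) := by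
          intro γ
          have hval : ∀ k : ↥K, (‖g γ k * c γ‖₊ : ENNReal) = (‖c γ‖₊ : ENNReal) := by
            intro k
            congr 1
            ext
            rw [coe_nnnorm, coe_nnnorm, norm_mul, hgnorm, one_mul]
          simp only [hval]
          rw [lintegral_const, hμKuniv, mul_one]
        have hts : ∑' γ : ↥C, ∫⁻ k : ↥K, ‖g γ k * c γ‖₊ ∂μK
            = ∑' γ : ↥C, (‖c γ‖₊ : ENNReal) := tsum_congr hsummand
        simp only [enorm_eq_nnnorm]
        rw [hts]
        exact ENNReal.tsum_coe_ne_top_iff_summable.mpr (NNReal.summable_coe.mp hcsummable)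
    -- the integrals for γ ≠ γ₀ vanish by orthogonality
    haveI : μK.IsMulLeftInvariant := by
      rw [hμKdef]; infer_instance
    have hterm : ∀ γ : ↥C, γ ≠ γ₀ → ∫ k : ↥K, g γ k * c γ ∂μK = 0 := by
      intro γ hne
      rw [integral_mul_const]
      have hnotmem : ¬((γ₀ : PontryaginDual G)⁻¹ * (γ : PontryaginDual G) ∈ annihilator H) := by
        intro hmem
        exact hne (Subtype.ext (hinj γ.2.1 γ₀.2.1 (QuotientGroup.eq.mpr hmem).symm))
      have hy : ∃ y ∈ H, (((γ₀ : PontryaginDual G))⁻¹ * (γ : PontryaginDual G)) y ≠ 1 := by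
        by_contra hcon
        push_neg at hcon
        exact hnotmem fun y hyH => hcon y hyH
      obtain ⟨y, hyH, hyne⟩ := hy
      have hz : ∫ k : ↥K, g γ k ∂μK = 0 := by
        apply integral_mulHom_eq_zero μK _ (hgcont γ) (hgmul γ) (⟨Φ ⟨y, hyH⟩, hΦmem _⟩ : ↥K)
        intro heq
        apply hyne
        have h1 : (((γ₀ : PontryaginDual G)) y)⁻¹ * ((γ : PontryaginDual G) y) = 1 :=
          Circle.ext (heq.trans Circle.coe_one.symm)
        exact h1
      rw [hz, zero_mul]
    have hterm0 : ∫ k : ↥K, g γ₀ k * c γ₀ ∂μK = c γ₀ := by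
      have hone : ∀ k : ↥K, g γ₀ k * c γ₀ = c γ₀ := by
        intro k
        rw [hgdef]
        simp only [inv_mul_cancel, Circle.coe_one, one_mul]
      simp only [hone]
      rw [integral_const]
      simp [hμKuniv]
    have hfinal : ∑' γ : ↥C, ∫ k : ↥K, g γ k * c γ ∂μK = c γ₀ :=
      (tsum_eq_single γ₀ fun γ hne => hterm γ hne).trans hterm0
    calc c γ₀ = ∑' γ : ↥C, ∫ k : ↥K, g γ k * c γ ∂μK := hfinal.symm
      _ = ∫ k : ↥K, ((((k : PontryaginDual G → Circle) ↑γ₀)⁻¹ : Circle) : ℂ) * F ↑k ∂μK :=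
          hR.symm
      _ = 0 := hL
  -- conclude that every atom of m is null
  have hAtom : ∀ γ : PontryaginDual G, m {γ} = 0 := by
    intro γ
    by_cases hγC : γ ∈ C
    · by_contra hne
      have hcz := hczero ⟨γ, hγC⟩
      rw [hcdef] at hcz
      simp only [] at hcz
      rcases smul_eq_zero.mp hcz with h0 | h0
      · rcases (ENNReal.toReal_eq_zero_iff _).mp h0 with h0 | h0
        · exact hne h0
        · exact (measure_ne_top m _) h0
      · have hone := hA γ hne
        rw [h0, norm_zero] at hone
        exact one_ne_zero hone.symm
    · exact measure_mono_null (by simpa using hγC) hCnull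
  have hC0 : m C = 0 := by
    have hun : C = ⋃ γ ∈ C, {γ} := (Set.biUnion_of_singleton C).symm
    rw [hun]
    exact (measure_biUnion_null_iff hCcount).mpr fun γ _ => hAtom γ
  have hle := measure_union_le (μ := m) C Cᶜ
  rw [Set.union_compl_self, hC0, hCnull] at hle
  simpa using hle
end
end

section
/- Let G be an LCA group, H a closed subgroup, Γ the dual group, Λ the annihilator of H, and μ a regular finite non-negative Borel measure on Γ such that the image measure μπ⁻¹ on Γ/Λ is discrete. If μ is concentrated on a transversal, then the space P(H) of trigonometric H-polynomials is dense in L^α(μ) for every α ∈ (0,∞). -/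
open MeasureTheory Set

noncomputable section

variable {G : Type*} [CommGroup G] [TopologicalSpace G] [IsTopologicalGroup G]
  [LocallyCompactSpace G] [T2Space G]

section Aux
set_option linter.unusedSectionVars false

namespace TrigAux

lemma circle_coe_pow (z : Circle) (k : ℕ) : ((z^k : Circle):ℂ) = (z:ℂ)^k :=
  map_pow Circle.coeHom z k

lemma norm_circle_coe (x : Circle) : ‖(x:ℂ)‖ = 1 := by
  rw [Circle.norm_coe]

variable {G : Type*} [CommGroup G] [TopologicalSpace G] [IsTopologicalGroup G]
  [LocallyCompactSpace G] [T2Space G] {H : Subgroup G}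

lemma zero_mem : (fun _ : PontryaginDual G => (0:ℂ)) ∈ trigPoly H :=
  ⟨0, ![], ![], fun i => i.elim0, by funext γ; simp⟩

lemma one_mem : (fun _ : PontryaginDual G => (1:ℂ)) ∈ trigPoly H :=
  ⟨1, fun _ => 1, fun _ => 1, fun _ => H.one_mem, by funext γ; simp⟩

lemma smul_mem {p} (c : ℂ) (hp : p ∈ trigPoly H) :
    (fun γ => c * p γ) ∈ trigPoly H := by
  obtain ⟨n, a, y, hy, rfl⟩ := hp
  exact ⟨n, fun i => c * a i, y, hy, by funext γ; simp [Finset.mul_sum, mul_assoc]⟩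

lemma add_mem {p q} (hp : p ∈ trigPoly H) (hq : q ∈ trigPoly H) :
    (fun γ => p γ + q γ) ∈ trigPoly H := by
  obtain ⟨n, a, y, hy, rfl⟩ := hp
  obtain ⟨m, b, z, hz, rfl⟩ := hq
  refine ⟨n + m, Fin.append a b, Fin.append y z, ?_, ?_⟩
  · intro i
    refine Fin.addCases (fun i => ?_) (fun i => ?_) i
    · rw [Fin.append_left]; exact hy i
    · rw [Fin.append_right]; exact hz i
  · funext γ
    rw [Fin.sum_univ_add]
    simp [Fin.append_left, Fin.append_right]

lemma mul_mem {p q} (hp : p ∈ trigPoly H) (hq : q ∈ trigPoly H) :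
    (fun γ => p γ * q γ) ∈ trigPoly H := by
  obtain ⟨n, a, y, hy, rfl⟩ := hp
  obtain ⟨m, b, z, hz, rfl⟩ := hq
  refine ⟨n * m, fun k => a (finProdFinEquiv.symm k).1 * b (finProdFinEquiv.symm k).2,
    fun k => y (finProdFinEquiv.symm k).1 * z (finProdFinEquiv.symm k).2,
    fun k => H.mul_mem (hy _) (hz _), ?_⟩
  funext γ
  rw [← Equiv.sum_comp (finProdFinEquiv : Fin n × Fin m ≃ Fin (n*m))
    (fun k => (a (finProdFinEquiv.symm k).1 * b (finProdFinEquiv.symm k).2) *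
      ((γ (y (finProdFinEquiv.symm k).1 * z (finProdFinEquiv.symm k).2) : Circle) : ℂ))]
  simp only [Equiv.symm_apply_apply]
  rw [Fintype.sum_prod_type, Finset.sum_mul_sum]
  refine Finset.sum_congr rfl fun i _ => Finset.sum_congr rfl fun j _ => ?_
  rw [map_mul]; push_cast; ring

lemma sum_mem {ι : Type*} (s : Finset ι) (f : ι → (PontryaginDual G → ℂ))
    (hf : ∀ i ∈ s, f i ∈ trigPoly H) :
    (fun γ => ∑ i ∈ s, f i γ) ∈ trigPoly H := by
  classical
  induction s using Finset.induction_on with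
  | empty => simpa using (zero_mem (H := H))
  | @insert x t hx ih =>
    simp only [Finset.sum_insert hx]
    exact add_mem (hf x (Finset.mem_insert_self x t))
      (ih fun i hi => hf i (Finset.mem_insert_of_mem hi))

lemma prod_mem {ι : Type*} (s : Finset ι) (f : ι → (PontryaginDual G → ℂ))
    (hf : ∀ i ∈ s, f i ∈ trigPoly H) :
    (fun γ => ∏ i ∈ s, f i γ) ∈ trigPoly H := by
  classical
  induction s using Finset.induction_on with
  | empty => simpa using (one_mem (H := H))
  | @insert x t hx ih =>
    simp only [Finset.prod_insert hx]
    exact mul_mem (hf x (Finset.mem_insert_self x t))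
      (ih fun i hi => hf i (Finset.mem_insert_of_mem hi))

lemma cesaro {x z : PontryaginDual G} {h : G} (hh : h ∈ H)
    (hne : x h ≠ z h) {δ : ℝ} (hδ : 0 < δ) :
    ∃ q ∈ trigPoly H, (∀ γ, ‖q γ‖ ≤ 1) ∧ q x = 1 ∧ ‖q z‖ ≤ δ := by
  set c : ℂ := ((x h : Circle) : ℂ) with hcdef
  set d : ℂ := ((z h : Circle) : ℂ) with hddef
  have hc : ‖c‖ = 1 := norm_circle_coe _
  have hd : ‖d‖ = 1 := norm_circle_coe _
  have hc0 : c ≠ 0 := by intro h0; rw [h0] at hc; simp at hc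
  set u : ℂ := d / c with hudef
  have hu1 : u ≠ 1 := by
    intro heq
    have : d = c := (div_eq_one_iff_eq hc0).mp heq
    exact hne (Circle.coe_injective this.symm)
  have hun : ‖u‖ = 1 := by rw [hudef, norm_div, hc, hd, div_one]
  have hw : 0 < ‖u - 1‖ := by
    rw [norm_pos_iff]; exact sub_ne_zero.mpr hu1
  obtain ⟨m₀, hm₀⟩ := exists_nat_ge (2 / (δ * ‖u - 1‖))
  set m : ℕ := m₀ + 1 with hmdef
  have hmpos : (0:ℝ) < m := by positivity
  have hmm : 2 / (δ * ‖u - 1‖) ≤ (m:ℝ) := le_trans hm₀ (by exact_mod_cast Nat.le_succ m₀)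
  refine ⟨fun γ => (m : ℂ)⁻¹ * ∑ k ∈ Finset.range m, (((γ h : Circle):ℂ) / c)^k,
    ⟨m, fun k => (m:ℂ)⁻¹ * (c⁻¹)^(k:ℕ), fun k => h^(k:ℕ), fun k => H.pow_mem hh _, ?_⟩,
    ?_, ?_, ?_⟩
  · funext γ
    rw [Finset.mul_sum, Fin.sum_univ_eq_sum_range
      (fun k => (m:ℂ)⁻¹ * (c⁻¹)^(k:ℕ) * ((γ (h^(k:ℕ)) : Circle):ℂ))]
    refine Finset.sum_congr rfl fun k _ => ?_
    rw [map_pow, div_pow]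
    push_cast [circle_coe_pow]
    field_simp
    rw [← mul_pow, mul_one_div_cancel hc0, one_pow]
  · intro γ
    rw [norm_mul, norm_inv]
    calc ‖(m:ℂ)‖⁻¹ * ‖∑ k ∈ Finset.range m, (((γ h : Circle):ℂ) / c)^k‖
        ≤ ‖(m:ℂ)‖⁻¹ * ∑ k ∈ Finset.range m, ‖(((γ h : Circle):ℂ) / c)^k‖ := by
          gcongr; exact norm_sum_le _ _
      _ = 1 := by
          have : ∀ k ∈ Finset.range m, ‖(((γ h : Circle):ℂ) / c)^k‖ = 1 := by
            intro k _
            rw [norm_pow, norm_div, show ‖(((γ h : Circle):ℂ))‖ = 1 from norm_circle_coe _, hc, div_one, one_pow]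
          rw [Finset.sum_congr rfl this, Finset.sum_const, Finset.card_range,
            Complex.norm_natCast, nsmul_eq_mul, mul_one,
            inv_mul_cancel₀ (ne_of_gt hmpos)]
  · show (m:ℂ)⁻¹ * ∑ k ∈ Finset.range m, (c / c)^k = 1
    simp only [div_self hc0, one_pow, Finset.sum_const, Finset.card_range, nsmul_eq_mul,
      mul_one]
    rw [inv_mul_cancel₀ (by exact_mod_cast ne_of_gt hmpos)]
  · have hgeom : ∑ k ∈ Finset.range m, u^k = (u^m - 1)/(u - 1) := geom_sum_eq hu1 m
    rw [norm_mul, norm_inv, Complex.norm_natCast, hgeom]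
    have hnum : ‖(u^m - 1)/(u - 1)‖ ≤ 2 / ‖u - 1‖ := by
      rw [norm_div]
      gcongr
      calc ‖u^m - 1‖ ≤ ‖u^m‖ + ‖(1:ℂ)‖ := norm_sub_le _ _
        _ = 2 := by rw [norm_pow, hun, one_pow, norm_one]; norm_num
    calc (m:ℝ)⁻¹ * ‖(u^m - 1)/(u - 1)‖ ≤ (m:ℝ)⁻¹ * (2 / ‖u - 1‖) := by gcongr
      _ ≤ δ := by
          rw [inv_mul_le_iff₀ hmpos]
          rw [div_le_iff₀ (by positivity)] at hmm
          rw [div_le_iff₀ hw]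
          nlinarith

lemma rpow_add_le' {α : ℝ} (hα : 0 ≤ α) (x y : ENNReal) :
    (x + y)^α ≤ 2^α * (x^α + y^α) := by
  have h1 : x + y ≤ 2 * max x y := by
    rcases le_total x y with h | h
    · calc x + y ≤ y + y := by gcongr
        _ = 2 * y := (two_mul y).symm
        _ ≤ 2 * max x y := by gcongr; exact le_max_right x y
    · calc x + y ≤ x + x := by gcongr
        _ = 2 * x := (two_mul x).symm
        _ ≤ 2 * max x y := by gcongr; exact le_max_left x y
  calc (x+y)^α ≤ (2 * max x y)^α := ENNReal.rpow_le_rpow h1 hα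
    _ = 2^α * (max x y)^α := ENNReal.mul_rpow_of_nonneg _ _ hα
    _ ≤ 2^α * (x^α + y^α) := by
        gcongr
        rcases le_total x y with h | h
        · rw [max_eq_right h]; exact le_add_self
        · rw [max_eq_left h]; exact le_self_add

lemma exists_finset_of_countable {X : Type*} [MeasurableSpace X] [MeasurableSingletonClass X]
    [Nonempty X] (ν : Measure X) [IsFiniteMeasure ν] {T : Set X} (hT : T.Countable)
    {δ : ENNReal} (hδ : 0 < δ) :
    ∃ F : Finset X, ↑F ⊆ T ∧ ν (T \ ↑F) < δ := by
  classical
  obtain ⟨e, he⟩ := (hT.insert (Classical.arbitrary X)).exists_eq_range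
    (insert_nonempty _ _)
  have hTe : T ⊆ range e := by rw [← he]; exact subset_insert _ _
  set A : ℕ → Set X := fun n => T \ (e '' Iio n) with hA
  have hmeas : ∀ n, MeasurableSet (A n) := fun n =>
    (hT.measurableSet).diff (((finite_Iio n).image e).measurableSet)
  have hanti : Antitone A := fun n m hnm =>
    diff_subset_diff_right (image_mono (Iio_subset_Iio hnm))
  have hint : ⋂ n, A n = ∅ := by
    ext x
    simp only [mem_iInter, mem_empty_iff_false, iff_false, not_forall]
    by_contra hcon
    push_neg at hcon
    have hxT : x ∈ T := (hcon 0).1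
    obtain ⟨k, hk⟩ := hTe hxT
    exact (hcon (k+1)).2 ⟨k, lt_add_one k, hk⟩
  have htend := tendsto_measure_iInter_atTop (fun n => (hmeas n).nullMeasurableSet)
    hanti ⟨0, measure_ne_top ν _⟩
  rw [hint, measure_empty] at htend
  have hev := htend.eventually_lt_const hδ
  obtain ⟨n, hn⟩ := hev.exists
  have hfin : (T ∩ e '' Iio n).Finite := Finite.inter_of_right ((finite_Iio n).image e) T
  refine ⟨hfin.toFinset, ?_, ?_⟩
  · rw [Finite.coe_toFinset]; exact inter_subset_left
  · rw [Finite.coe_toFinset]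
    have : T \ (T ∩ e '' Iio n) = A n := by
      rw [hA]; ext x; simp
    rwa [this]

end TrigAux
end Aux

/-- Theorem 3.2: if μ is a regular finite Borel measure on the dual group Γ
of G whose image on Γ/Λ is discrete and which is concentrated on a transversal, then the
trigonometric H-polynomials are dense in L^α(μ) for every α ∈ (0,∞). -/
theorem dense_of_transversal_discrete
    (H : Subgroup G) (hH : IsClosed (H : Set G))
    [MeasurableSpace (PontryaginDual G)] [BorelSpace (PontryaginDual G)]
    (μ : Measure (PontryaginDual G)) [IsFiniteMeasure μ] (hreg : PaperRegular μ)
    (hdisc : IsDiscreteMeasure (μ.map (QuotientGroup.mk (s := annihilator H))))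
    (htrans : ConcOnTransversal (annihilator H) μ) :
    ∀ α : ℝ, 0 < α → DenseInLp μ α (trigPoly H) := by
  classical
  intro α hα g hg hgint ε hε
  obtain ⟨S, hScount, hSnull⟩ := hdisc
  obtain ⟨D, hDmeas, hDnull, hDtrans⟩ := htrans
  set π : (PontryaginDual G) → (PontryaginDual G) ⧸ (annihilator H) := QuotientGroup.mk (s := annihilator H) with hπ
  have hπmeas : Measurable π := measurable_quotient_mk''
  -- the annihilator is closed
  have hΛclosed : IsClosed ((annihilator H : Subgroup (PontryaginDual G)) : Set (PontryaginDual G)) := by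
    have heq : ((annihilator H : Subgroup (PontryaginDual G)) : Set (PontryaginDual G)) = ⋂ y ∈ H, {γ : (PontryaginDual G) | γ y = 1} := by
      ext γ
      simp only [SetLike.mem_coe, mem_iInter, mem_setOf_eq]
      exact ⟨fun hg y hy => hg y hy, fun hg y hy => hg y hy⟩
    rw [heq]
    refine isClosed_biInter fun y _ => isClosed_eq ?_ continuous_const
    have h1 : Continuous fun f : C(G, Circle) => f y := continuous_eval_const y
    exact h1.comp (ContinuousMonoidHom.isInducing_toContinuousMap G Circle).continuous
  -- fibers of π are measurable, hence countable unions of fibers are measurable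
  have hfiber : ∀ b : (PontryaginDual G) ⧸ (annihilator H), MeasurableSet (π ⁻¹' {b}) := by
    intro b
    obtain ⟨x₀, rfl⟩ := QuotientGroup.mk_surjective b
    have : π ⁻¹' {(x₀ : (PontryaginDual G) ⧸ (annihilator H))}
        = (fun t : (PontryaginDual G) => t⁻¹ * x₀) ⁻¹' ((annihilator H : Subgroup (PontryaginDual G)) : Set (PontryaginDual G)) := by
      ext t
      simp only [mem_preimage, mem_singleton_iff, SetLike.mem_coe, hπ]
      exact ⟨fun h => QuotientGroup.eq.mp h, fun h => QuotientGroup.eq.mpr h⟩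
    rw [this]
    exact (hΛclosed.measurableSet).preimage (by fun_prop)
  have hSmeas : MeasurableSet S := by
    have : MeasurableSet (π ⁻¹' S) := by
      have hun : π ⁻¹' S = ⋃ b ∈ S, π ⁻¹' {b} := by
        ext x; simp
      rw [hun]
      exact MeasurableSet.biUnion hScount fun b _ => hfiber b
    exact this
  have hpre : μ (π ⁻¹' Sᶜ) = 0 := by
    rw [← Measure.map_apply hπmeas hSmeas.compl]
    exact hSnull
  -- injectivity of π on D
  have hkey : ∀ x ∈ D, ∀ z ∈ D, x⁻¹ * z ∈ annihilator H → x = z := by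
    intro x hx z hz hmem
    by_contra hxz
    have hne1 : x⁻¹ * z ≠ 1 := by
      intro h1
      exact hxz ((inv_mul_eq_one).mp h1)
    have := hDtrans _ hmem hne1
    have hzmem : z ∈ D ∩ ((fun t => (x⁻¹ * z) * t) '' D) :=
      ⟨hz, ⟨x, hx, by show x⁻¹ * z * x = z; rw [mul_comm x⁻¹ z, mul_assoc, inv_mul_cancel, mul_one]⟩⟩
    rw [this] at hzmem
    exact hzmem
  have hinj : ∀ x ∈ D, ∀ z ∈ D, π x = π z → x = z := fun x hx z hz hpi =>
    hkey x hx z hz (QuotientGroup.eq.mp hpi)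
  have hsep : ∀ x ∈ D, ∀ z ∈ D, x ≠ z → ∃ h ∈ H, x h ≠ z h := by
    intro x hx z hz hxz
    by_contra hcon
    push_neg at hcon
    refine hxz (hkey x hx z hz fun y hy => ?_)
    show (x y)⁻¹ * z y = 1
    rw [← hcon y hy, inv_mul_cancel]
  -- the countable carrier T
  set T : Set (PontryaginDual G) := D ∩ π ⁻¹' S with hT
  have hTD : T ⊆ D := inter_subset_left
  have hTcount : T.Countable := by
    have hun : T = ⋃ b ∈ S, (D ∩ π ⁻¹' {b}) := by
      ext x; simp [hT]
    rw [hun]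
    refine hScount.biUnion fun b _ => Subsingleton.countable ?_
    intro x hx z hz
    exact hinj x hx.1 z hz.1 (by rw [hx.2, hz.2])
  have hTnull : μ Tᶜ = 0 := by
    rw [hT, compl_inter]
    refine measure_union_null hDnull ?_
    rwa [preimage_compl] at hpre
  have hTmeas : MeasurableSet T := hTcount.measurableSet
  have hgmeas : Measurable fun x => ((‖g x‖₊ : ENNReal))^α := by fun_prop
  set ν : Measure (PontryaginDual G) :=
    μ.withDensity (fun x => (‖g x‖₊ : ENNReal)^α + 1) with hν
  have hνapp : ∀ B : Set (PontryaginDual G), MeasurableSet B →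
      ν B = ∫⁻ x in B, ((‖g x‖₊ : ENNReal)^α + 1) ∂μ := fun B hB => withDensity_apply _ hB
  haveI hνfin : IsFiniteMeasure ν := by
    constructor
    rw [hνapp univ MeasurableSet.univ, Measure.restrict_univ,
      lintegral_add_right _ measurable_const, lintegral_one]
    exact ENNReal.add_lt_top.mpr ⟨hgint, measure_lt_top μ _⟩
  have hμν : ∀ B : Set (PontryaginDual G), MeasurableSet B → μ B ≤ ν B := by
    intro B hB
    rw [hνapp B hB]
    calc μ B = ∫⁻ _ in B, 1 ∂μ := by rw [setLIntegral_const, one_mul]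
      _ ≤ _ := lintegral_mono fun x => le_add_self
  have hgν : ∀ B : Set (PontryaginDual G), MeasurableSet B →
      ∫⁻ x in B, (‖g x‖₊ : ENNReal)^α ∂μ ≤ ν B := by
    intro B hB
    rw [hνapp B hB]
    exact lintegral_mono fun x => le_self_add
  -- main constants
  set ε' : ENNReal := min ε 1 with hε'
  have hε'pos : 0 < ε' := lt_min hε one_pos
  have hε'0 : ε' ≠ 0 := hε'pos.ne'
  have hε'top : ε' ≠ ⊤ := ((min_le_right _ _).trans_lt ENNReal.one_lt_top).ne
  have hε'le : ε' ≤ ε := min_le_left _ _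
  set K : ENNReal := 2^α with hK
  have hK0 : K ≠ 0 := (ENNReal.rpow_pos (by norm_num) (by norm_num)).ne'
  have hKtop : K ≠ ⊤ := ENNReal.rpow_ne_top_of_nonneg hα.le (by norm_num)
  set M : ENNReal := μ univ with hM
  have hMtop : M ≠ ⊤ := measure_ne_top μ _
  set e4 : ENNReal := ε'/4 with he4
  have he40 : e4 ≠ 0 := (ENNReal.div_pos hε'0 (by norm_num)).ne'
  have he4top : e4 ≠ ⊤ := (ENNReal.div_lt_top hε'top (by norm_num)).ne
  set δ₁ : ENNReal := e4 / K with hδ₁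
  have hδ₁pos : 0 < δ₁ := ENNReal.div_pos he40 hKtop
  obtain ⟨F, hFT, hνF⟩ := TrigAux.exists_finset_of_countable ν hTcount hδ₁pos
  set Cn : NNReal := ∑ i ∈ F, ‖g i‖₊ with hCn
  set Cα : ENNReal := ((Cn : ENNReal))^α with hCα
  have hCαtop : Cα ≠ ⊤ := ENNReal.rpow_ne_top_of_nonneg hα.le ENNReal.coe_ne_top
  set δ₂ : ENNReal := e4 / (K * (1 + Cα)) with hδ₂
  have hδ₂pos : 0 < δ₂ := ENNReal.div_pos he40 (by
    exact ENNReal.mul_ne_top hKtop (by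
      exact ENNReal.add_ne_top.mpr ⟨ENNReal.one_ne_top, hCαtop⟩))
  obtain ⟨F₂, hF₂T, hνF₂⟩ := TrigAux.exists_finset_of_countable ν hTcount hδ₂pos
  set F' : Finset (PontryaginDual G) := F ∪ F₂ with hF'
  have hF'T : ↑F' ⊆ T := by
    rw [hF', Finset.coe_union]; exact union_subset hFT hF₂T
  have hFF' : F ⊆ F' := Finset.subset_union_left
  have hνF' : ν (T \ ↑F') < δ₂ := by
    refine lt_of_le_of_lt (measure_mono (diff_subset_diff_right ?_)) hνF₂
    rw [hF', Finset.coe_union]; exact subset_union_right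
  set τ : ENNReal := e4 / ((1+K)*(M+1)) with hτ
  have hτpos : 0 < τ := ENNReal.div_pos he40 (by
    exact ENNReal.mul_ne_top (ENNReal.add_ne_top.mpr ⟨ENNReal.one_ne_top, hKtop⟩)
      (ENNReal.add_ne_top.mpr ⟨hMtop, ENNReal.one_ne_top⟩))
  have hτtop : τ ≠ ⊤ := (ENNReal.div_lt_top he4top (by
    intro h0
    rw [mul_eq_zero] at h0
    rcases h0 with h0 | h0
    · exact (by simp : (1:ENNReal) + K ≠ 0) h0
    · exact (by simp : M + 1 ≠ (0:ENNReal)) h0)).ne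
  set θ : ENNReal := min 1 (τ^(1/α)) with hθ
  have hθpos : 0 < θ := lt_min one_pos (ENNReal.rpow_pos hτpos hτtop)
  have hθtop : θ ≠ ⊤ := ((min_le_left _ _).trans_lt ENNReal.one_lt_top).ne
  set δr : NNReal := θ.toNNReal / (Cn + 1) with hδr
  have hθ'pos : 0 < θ.toNNReal := ENNReal.toNNReal_pos hθpos.ne' hθtop
  have hδrpos : (0:ℝ) < (δr:ℝ) := by
    have : 0 < δr := div_pos hθ'pos (by positivity)
    exact_mod_cast this
  have hkeybound : ((Cn * δr : NNReal) : ENNReal)^α ≤ τ := by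
    have h1 : (Cn * δr : NNReal) ≤ θ.toNNReal := by
      rw [hδr]
      calc Cn * (θ.toNNReal / (Cn + 1)) = θ.toNNReal * (Cn / (Cn + 1)) := by
            rw [mul_comm, div_mul_eq_mul_div, mul_div_assoc]
        _ ≤ θ.toNNReal * 1 := by
            gcongr
            exact div_le_one_of_le₀ (le_add_self.trans (by rw [add_comm])) zero_le
        _ = θ.toNNReal := mul_one _
    have h2 : ((Cn * δr : NNReal) : ENNReal) ≤ τ^(1/α) := by
      calc ((Cn * δr : NNReal) : ENNReal) ≤ (θ.toNNReal : ENNReal) := by exact_mod_cast h1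
        _ = θ := ENNReal.coe_toNNReal hθtop
        _ ≤ τ^(1/α) := min_le_right _ _
    calc ((Cn * δr : NNReal) : ENNReal)^α ≤ (τ^(1/α))^α := ENNReal.rpow_le_rpow h2 hα.le
      _ = τ^((1/α)*α) := (ENNReal.rpow_mul τ (1/α) α).symm
      _ = τ := by rw [one_div_mul_cancel hα.ne', ENNReal.rpow_one]
  -- interpolation polynomials
  have hqex : ∀ i ∈ F, ∀ j ∈ F', i ≠ j →
      ∃ q, q ∈ trigPoly H ∧ (∀ γ, ‖q γ‖ ≤ 1) ∧ q i = 1 ∧ ‖q j‖ ≤ (δr:ℝ) := by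
    intro i hi j hj hij
    obtain ⟨h, hh, hne⟩ := hsep i (hTD (hFT hi)) j (hTD (hF'T hj)) hij
    obtain ⟨q, hq1, hq2, hq3, hq4⟩ := TrigAux.cesaro hh hne hδrpos
    exact ⟨q, hq1, hq2, hq3, hq4⟩
  choose! q hq1 hq2 hq3 hq4 using hqex
  set piF : PontryaginDual G → PontryaginDual G → ℂ :=
    fun i γ => ∏ k ∈ F'.erase i, q i k γ with hpiF
  set p : PontryaginDual G → ℂ := fun γ => ∑ i ∈ F, g i * piF i γ with hp
  have hpmem : p ∈ trigPoly H := by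
    rw [hp]
    refine TrigAux.sum_mem F _ fun i hi => ?_
    refine TrigAux.smul_mem _ ?_
    simp only [hpiF]
    refine TrigAux.prod_mem _ _ fun k hk => ?_
    obtain ⟨hki, hkF'⟩ := Finset.mem_erase.mp hk
    exact hq1 i hi k hkF' (Ne.symm hki)
  have hpi_le1 : ∀ i ∈ F, ∀ γ, ‖piF i γ‖ ≤ 1 := by
    intro i hi γ
    simp only [hpiF]
    rw [norm_prod]
    refine Finset.prod_le_one (fun k _ => norm_nonneg _) fun k hk => ?_
    obtain ⟨hki, hkF'⟩ := Finset.mem_erase.mp hk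
    exact hq2 i hi k hkF' (Ne.symm hki) γ
  have hpi_one : ∀ i ∈ F, piF i i = 1 := by
    intro i hi
    simp only [hpiF]
    refine Finset.prod_eq_one fun k hk => ?_
    obtain ⟨hki, hkF'⟩ := Finset.mem_erase.mp hk
    exact hq3 i hi k hkF' (Ne.symm hki)
  have hpi_small : ∀ i ∈ F, ∀ z ∈ F', z ≠ i → ‖piF i z‖ ≤ (δr:ℝ) := by
    intro i hi z hz hzi
    have hzmem : z ∈ F'.erase i := Finset.mem_erase.mpr ⟨hzi, hz⟩
    simp only [hpiF]
    rw [norm_prod, ← Finset.mul_prod_erase _ _ hzmem]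
    calc ‖q i z z‖ * ∏ k ∈ (F'.erase i).erase z, ‖q i k z‖
        ≤ (δr:ℝ) * 1 := by
          refine mul_le_mul (hq4 i hi z hz (Ne.symm hzi)) ?_ ?_ (le_of_lt hδrpos)
          · refine Finset.prod_le_one (fun k _ => norm_nonneg _) fun k hk => ?_
            obtain ⟨_, hk2⟩ := Finset.mem_erase.mp hk
            obtain ⟨hki, hkF'⟩ := Finset.mem_erase.mp hk2
            exact hq2 i hi k hkF' (Ne.symm hki) _
          · exact Finset.prod_nonneg fun k _ => norm_nonneg _
      _ = (δr:ℝ) := mul_one _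
  set Cr : ℝ := (Cn : ℝ) with hCrdef
  have hCreq : Cr = ∑ i ∈ F, ‖g i‖ := by
    rw [hCrdef, hCn]
    push_cast
    rfl
  have hCrnn : 0 ≤ Cr := by rw [hCrdef]; positivity
  have hpbound : ∀ γ, ‖p γ‖ ≤ Cr := by
    intro γ
    simp only [hp]
    calc ‖∑ i ∈ F, g i * piF i γ‖ ≤ ∑ i ∈ F, ‖g i * piF i γ‖ := norm_sum_le _ _
      _ ≤ ∑ i ∈ F, ‖g i‖ := Finset.sum_le_sum fun i hi => by
          rw [norm_mul]
          exact mul_le_of_le_one_right (norm_nonneg _) (hpi_le1 i hi γ)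
      _ = Cr := hCreq.symm
  have hboundF : ∀ j ∈ F, ‖g j - p j‖ ≤ Cr * (δr:ℝ) := by
    intro j hj
    have hpj : p j = g j + ∑ i ∈ F.erase j, g i * piF i j := by
      simp only [hp]
      rw [← Finset.add_sum_erase _ _ hj, hpi_one j hj, mul_one]
    rw [hpj, show g j - (g j + ∑ i ∈ F.erase j, g i * piF i j)
        = -(∑ i ∈ F.erase j, g i * piF i j) by ring, norm_neg]
    calc ‖∑ i ∈ F.erase j, g i * piF i j‖ ≤ ∑ i ∈ F.erase j, ‖g i‖ * ‖piF i j‖ := by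
          refine (norm_sum_le _ _).trans (le_of_eq ?_)
          exact Finset.sum_congr rfl fun i _ => norm_mul _ _
      _ ≤ ∑ i ∈ F.erase j, ‖g i‖ * (δr:ℝ) := Finset.sum_le_sum fun i hi => by
          obtain ⟨hij, hiF⟩ := Finset.mem_erase.mp hi
          exact mul_le_mul_of_nonneg_left
            (hpi_small i hiF j (hFF' hj) (Ne.symm hij)) (norm_nonneg _)
      _ = (∑ i ∈ F.erase j, ‖g i‖) * (δr:ℝ) := (Finset.sum_mul _ _ _).symm
      _ ≤ Cr * (δr:ℝ) := by
          refine mul_le_mul_of_nonneg_right ?_ (le_of_lt hδrpos)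
          rw [hCreq]
          exact Finset.sum_le_sum_of_subset_of_nonneg (Finset.erase_subset _ _)
            (fun i _ _ => norm_nonneg _)
  have hpsmall : ∀ j ∈ F', j ∉ F → ‖p j‖ ≤ Cr * (δr:ℝ) := by
    intro j hj hjF
    simp only [hp]
    calc ‖∑ i ∈ F, g i * piF i j‖ ≤ ∑ i ∈ F, ‖g i‖ * ‖piF i j‖ := by
          refine (norm_sum_le _ _).trans (le_of_eq ?_)
          exact Finset.sum_congr rfl fun i _ => norm_mul _ _
      _ ≤ ∑ i ∈ F, ‖g i‖ * (δr:ℝ) := Finset.sum_le_sum fun i hi => by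
          refine mul_le_mul_of_nonneg_left
            (hpi_small i hi j hj fun hji => hjF (hji ▸ hi)) (norm_nonneg _)
      _ = Cr * (δr:ℝ) := by rw [← Finset.sum_mul, ← hCreq]
  have hboundF' : ∀ j ∈ F', j ∉ F → ‖g j - p j‖ ≤ ‖g j‖ + Cr * (δr:ℝ) := by
    intro j hj hjF
    refine (norm_sub_le _ _).trans ?_
    exact add_le_add_right (hpsmall j hj hjF) _
  have hboundall : ∀ γ, ‖g γ - p γ‖ ≤ ‖g γ‖ + Cr := fun γ =>
    (norm_sub_le _ _).trans (add_le_add_right (hpbound γ) _)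
  -- ENNReal pointwise conversions
  have hconv : ∀ (x : ℂ) (r : ℝ), ‖x‖ ≤ r → ((‖x‖₊ : ENNReal))^α ≤ (ENNReal.ofReal r)^α := by
    intro x r hr
    refine ENNReal.rpow_le_rpow ?_ hα.le
    rw [← enorm_eq_nnnorm, ← ofReal_norm]
    exact ENNReal.ofReal_le_ofReal hr
  have hCδ : ENNReal.ofReal (Cr * (δr:ℝ)) = ((Cn * δr : NNReal) : ENNReal) := by
    rw [hCrdef, ← NNReal.coe_mul, ENNReal.ofReal_coe_nnreal]
  have hCof : ENNReal.ofReal Cr = (Cn : ENNReal) := by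
    rw [hCrdef, ENNReal.ofReal_coe_nnreal]
  set f : PontryaginDual G → ENNReal := fun x => ((‖g x - p x‖₊ : ENNReal))^α with hf
  have hfF : ∀ x ∈ (↑F : Set (PontryaginDual G)), f x ≤ τ := by
    intro x hx
    refine le_trans (hconv _ _ (hboundF x hx)) ?_
    rw [hCδ]; exact hkeybound
  have hsplit : ∀ (x) (r : ℝ), 0 ≤ r → ‖g x - p x‖ ≤ ‖g x‖ + r →
      f x ≤ K * ((‖g x‖₊ : ENNReal))^α + K * (ENNReal.ofReal r)^α := by
    intro x r hr hb
    refine le_trans (hconv _ _ hb) ?_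
    rw [ENNReal.ofReal_add (norm_nonneg _) hr, ofReal_norm, enorm_eq_nnnorm]
    refine le_trans (TrigAux.rpow_add_le' hα.le _ _) ?_
    rw [hK, mul_add]
  have hfF' : ∀ x ∈ (↑F' : Set (PontryaginDual G)) \ ↑F,
      f x ≤ K * ((‖g x‖₊ : ENNReal))^α + K * τ := by
    intro x hx
    have h1 := hboundF' x (Finset.mem_coe.mp hx.1) (fun hc => hx.2 (Finset.mem_coe.mpr hc))
    refine le_trans (hsplit x _ (by positivity) h1) ?_
    gcongr
    rw [hCδ]; exact hkeybound
  have hfall : ∀ x, f x ≤ K * ((‖g x‖₊ : ENNReal))^α + K * Cα := by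
    intro x
    refine le_trans (hsplit x Cr hCrnn (hboundall x)) ?_
    rw [hCof, ← hCα]
  have hFmeas : MeasurableSet (↑F : Set (PontryaginDual G)) := F.measurableSet
  have hF'meas : MeasurableSet (↑F' : Set (PontryaginDual G)) := F'.measurableSet
  have hdecomp : ∫⁻ x, f x ∂μ = (∫⁻ x in (↑F : Set (PontryaginDual G)), f x ∂μ) +
      ((∫⁻ x in (↑F' : Set (PontryaginDual G)) \ ↑F, f x ∂μ) +
       (∫⁻ x in ((↑F' : Set (PontryaginDual G)))ᶜ, f x ∂μ)) := by
    rw [← lintegral_add_compl f hFmeas]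
    congr 1
    have hseteq : (↑F : Set (PontryaginDual G))ᶜ =
        ((↑F' : Set (PontryaginDual G)) \ ↑F) ∪ ((↑F' : Set (PontryaginDual G)))ᶜ := by
      ext x
      simp only [mem_compl_iff, mem_union, mem_diff]
      constructor
      · intro hx
        by_cases hx' : x ∈ (↑F' : Set (PontryaginDual G))
        · exact Or.inl ⟨hx', hx⟩
        · exact Or.inr hx'
      · rintro (⟨_, hx⟩ | hx')
        · exact hx
        · exact fun hx => hx' (Finset.mem_coe.mpr (hFF' (Finset.mem_coe.mp hx)))
    rw [hseteq, lintegral_union hF'meas.compl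
      (disjoint_left.mpr fun x hx hx' => hx' hx.1)]
  have hT1 : ∫⁻ x in (↑F : Set (PontryaginDual G)), f x ∂μ ≤ τ * M := by
    calc ∫⁻ x in (↑F : Set (PontryaginDual G)), f x ∂μ
        ≤ ∫⁻ _ in (↑F : Set (PontryaginDual G)), τ ∂μ :=
          lintegral_mono_ae ((ae_restrict_iff' hFmeas).mpr (ae_of_all _ hfF))
      _ = τ * μ ↑F := setLIntegral_const _ _
      _ ≤ τ * M := by rw [hM]; exact mul_le_mul_right (measure_mono (subset_univ _)) τ
  have hT2 : ∫⁻ x in (↑F' : Set (PontryaginDual G)) \ ↑F, f x ∂μ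
      ≤ K * ν (T \ ↑F) + K * τ * M := by
    calc ∫⁻ x in (↑F' : Set (PontryaginDual G)) \ ↑F, f x ∂μ
        ≤ ∫⁻ x in (↑F' : Set (PontryaginDual G)) \ ↑F,
            (K * ((‖g x‖₊ : ENNReal))^α + K * τ) ∂μ :=
          lintegral_mono_ae ((ae_restrict_iff' (hF'meas.diff hFmeas)).mpr (ae_of_all _ hfF'))
      _ = K * (∫⁻ x in (↑F' : Set (PontryaginDual G)) \ ↑F, ((‖g x‖₊ : ENNReal))^α ∂μ)
          + (K * τ) * μ ((↑F' : Set (PontryaginDual G)) \ ↑F) := by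
          rw [lintegral_add_right _ measurable_const, setLIntegral_const,
            lintegral_const_mul _ hgmeas]
      _ ≤ K * ν (T \ ↑F) + K * τ * M := by
          refine add_le_add (mul_le_mul_right ?_ K) (mul_le_mul_right ?_ (K * τ))
          · refine le_trans (lintegral_mono_set ?_) (hgν _ (hTmeas.diff hFmeas))
            exact fun x hx => ⟨hF'T hx.1, hx.2⟩
          · rw [hM]; exact measure_mono (subset_univ _)
  have hT3 : ∫⁻ x in ((↑F' : Set (PontryaginDual G)))ᶜ, f x ∂μ
      ≤ K * ν (T \ ↑F') + K * Cα * ν (T \ ↑F') := by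
    have hsub : ((↑F' : Set (PontryaginDual G)))ᶜ ⊆ (T \ ↑F') ∪ Tᶜ := by
      intro x hx
      by_cases hxT : x ∈ T
      · exact Or.inl ⟨hxT, hx⟩
      · exact Or.inr hxT
    calc ∫⁻ x in ((↑F' : Set (PontryaginDual G)))ᶜ, f x ∂μ
        ≤ ∫⁻ x in ((↑F' : Set (PontryaginDual G)))ᶜ,
            (K * ((‖g x‖₊ : ENNReal))^α + K * Cα) ∂μ := lintegral_mono fun x => hfall x
      _ = K * (∫⁻ x in ((↑F' : Set (PontryaginDual G)))ᶜ, ((‖g x‖₊ : ENNReal))^α ∂μ)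
          + (K * Cα) * μ (((↑F' : Set (PontryaginDual G)))ᶜ) := by
          rw [lintegral_add_right _ measurable_const, setLIntegral_const,
            lintegral_const_mul _ hgmeas]
      _ ≤ K * ν (T \ ↑F') + K * Cα * ν (T \ ↑F') := by
          refine add_le_add (mul_le_mul_right ?_ K) (mul_le_mul_right ?_ (K * Cα))
          · refine le_trans (lintegral_mono_set hsub) ?_
            refine le_trans (lintegral_union_le _ _ _) ?_
            rw [setLIntegral_measure_zero _ _ hTnull, add_zero]
            exact hgν _ (hTmeas.diff hF'meas)
          · refine le_trans (measure_mono hsub) ?_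
            refine le_trans (measure_union_le _ _) ?_
            rw [hTnull, add_zero]
            exact hμν _ (hTmeas.diff hF'meas)
  have hb1 : τ * M + K * τ * M ≤ e4 := by
    have heq : τ * M + K * τ * M = ((1+K)*M) * τ := by ring
    rw [heq]
    calc ((1+K)*M)*τ ≤ ((1+K)*(M+1))*τ := by
          exact mul_le_mul_left (mul_le_mul_right le_self_add _) τ
      _ ≤ e4 := by rw [hτ]; exact ENNReal.mul_div_le
  have hb2 : K * ν (T \ ↑F) ≤ e4 := by
    calc K * ν (T \ ↑F) ≤ K * δ₁ := mul_le_mul_right hνF.le K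
      _ ≤ e4 := by rw [hδ₁]; exact ENNReal.mul_div_le
  have hb3 : K * ν (T \ ↑F') + K * Cα * ν (T \ ↑F') ≤ e4 := by
    have heq : K * ν (T \ ↑F') + K * Cα * ν (T \ ↑F')
        = (K * (1 + Cα)) * ν (T \ ↑F') := by ring
    rw [heq]
    calc (K * (1 + Cα)) * ν (T \ ↑F') ≤ (K * (1 + Cα)) * δ₂ := mul_le_mul_right hνF'.le _
      _ ≤ e4 := by rw [hδ₂]; exact ENNReal.mul_div_le
  refine ⟨p, hpmem, ?_⟩
  calc ∫⁻ x, ((‖g x - p x‖₊ : ENNReal))^α ∂μ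
      = (∫⁻ x in (↑F : Set (PontryaginDual G)), f x ∂μ) +
        ((∫⁻ x in (↑F' : Set (PontryaginDual G)) \ ↑F, f x ∂μ) +
         (∫⁻ x in ((↑F' : Set (PontryaginDual G)))ᶜ, f x ∂μ)) := hdecomp
    _ ≤ (τ * M) + ((K * ν (T \ ↑F) + K * τ * M) +
        (K * ν (T \ ↑F') + K * Cα * ν (T \ ↑F'))) :=
        add_le_add hT1 (add_le_add hT2 hT3)
    _ = (τ * M + K * τ * M) + (K * ν (T \ ↑F)) +
        (K * ν (T \ ↑F') + K * Cα * ν (T \ ↑F')) := by ring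
    _ ≤ e4 + e4 + e4 := add_le_add (add_le_add hb1 hb2) hb3
    _ = 3 * e4 := by ring
    _ < 4 * e4 := by
        rw [ENNReal.mul_lt_mul_iff_left he40 he4top]
        norm_num
    _ ≤ ε' := by rw [he4]; exact ENNReal.mul_div_le
    _ ≤ ε := hε'le
end
end

section
/- Let Γ be a Polish LCA group, Λ a closed subgroup, π : Γ → Γ/Λ the quotient map, and μ a finite Borel measure on Γ. Then μ is concentrated on a transversal (∃ Borel D with μ(Γ\D)=0 and D∩(λ+D)=∅ for all λ∈Λ\{0}) if and only if there exists a Borel measurable function τ : Γ/Λ → Γ with τ(γ̃) ∈ π⁻¹({γ̃}) for all γ̃, such that ∫_Γ f dμ = ∫_{Γ/Λ} f(τ(γ̃)) d(μπ⁻¹)(γ̃) for all f ∈ L¹(μ). -/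
open MeasureTheory Set Metric Filter

/-- Existence of a Borel measurable cross-section for the quotient of a Polish
topological additive group by a closed subgroup (Feldman–Greenleaf / selection). -/
theorem exists_measurable_cross_section
    {Γ : Type*} [AddCommGroup Γ] [TopologicalSpace Γ] [IsTopologicalAddGroup Γ]
    [PolishSpace Γ] [MeasurableSpace Γ] [BorelSpace Γ]
    (Λ : AddSubgroup Γ) (hΛ : IsClosed (Λ : Set Γ)) [BorelSpace (Γ ⧸ Λ)] :
    ∃ σ : Γ ⧸ Λ → Γ, Measurable σ ∧ ∀ q, QuotientAddGroup.mk (s := Λ) (σ q) = q := by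
  classical
  haveI : IsClosed ((Λ : Set Γ)) := hΛ
  letI := TopologicalSpace.upgradeIsCompletelyMetrizable Γ
  set π : Γ → Γ ⧸ Λ := QuotientAddGroup.mk (s := Λ) with hπdef
  have hπc : Continuous π := continuous_quot_mk
  have hπo : IsOpenMap π := QuotientAddGroup.isOpenMap_coe
  -- fibers
  have hfib_ne : ∀ q : Γ ⧸ Λ, ∃ x, π x = q := fun q => ⟨Quotient.out q, Quotient.out_eq q⟩
  have hfib_closed : ∀ q : Γ ⧸ Λ, IsClosed {x | π x = q} := by
    intro q
    have : {x | π x = q} = π ⁻¹' {q} := rfl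
    rw [this]
    exact (isClosed_singleton).preimage hπc
  -- dense sequence
  have : Nonempty Γ := ⟨0⟩
  set u : ℕ → Γ := TopologicalSpace.denseSeq Γ with hu
  have hud : DenseRange u := TopologicalSpace.denseRange_denseSeq Γ
  set r : ℕ → ℝ := fun n => (1/2 : ℝ) ^ n with hr
  have hrpos : ∀ n, 0 < r n := fun n => by positivity
  -- openness of the basic sets
  have hopen : ∀ (c : Γ) (ε : ℝ), MeasurableSet {q : Γ ⧸ Λ | ∃ y, π y = q ∧ dist y c < ε} := by
    intro c ε
    have : {q : Γ ⧸ Λ | ∃ y, π y = q ∧ dist y c < ε} = π '' ball c ε := by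
      ext q; constructor
      · rintro ⟨y, hy, hd⟩; exact ⟨y, by simpa [mem_ball] using hd, hy⟩
      · rintro ⟨y, hy, hyq⟩; exact ⟨y, hyq, by simpa [mem_ball] using hy⟩
    rw [this]
    exact (hπo _ isOpen_ball).measurableSet
  -- invariant
  set Inv : ℕ → (Γ ⧸ Λ → Γ) → Prop :=
    fun n f => ∀ q, ∃ x, π x = q ∧ dist x (f q) < r n with hInv
  -- base step
  have base : ∃ f : Γ ⧸ Λ → Γ, Measurable f ∧ Inv 0 f := by
    have hex : ∀ q : Γ ⧸ Λ, ∃ i, ∃ y, π y = q ∧ dist y (u i) < r 0 := by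
      intro q
      obtain ⟨x, hx⟩ := hfib_ne q
      obtain ⟨i, hi⟩ := hud.exists_dist_lt x (hrpos 0)
      exact ⟨i, x, hx, hi⟩
    refine ⟨fun q => u (Nat.find (hex q)), ?_, ?_⟩
    · exact Measurable.find (fun i => measurable_const) (fun i => hopen (u i) (r 0)) hex
    · intro q
      obtain ⟨y, hy, hd⟩ := Nat.find_spec (hex q)
      exact ⟨y, hy, hd⟩
  -- inductive step
  have key : ∀ (n : ℕ) (f : Γ ⧸ Λ → Γ), Measurable f → Inv n f →
      ∃ g : Γ ⧸ Λ → Γ, Measurable g ∧ Inv (n+1) g ∧ ∀ q, dist (g q) (f q) ≤ 2 * r n := by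
    intro n f hfm hfi
    have hex : ∀ q : Γ ⧸ Λ, ∃ i, (∃ y, π y = q ∧ dist y (u i) < r (n+1)) ∧
        dist (u i) (f q) < r n + r (n+1) := by
      intro q
      obtain ⟨x, hx, hdx⟩ := hfi q
      obtain ⟨i, hi⟩ := hud.exists_dist_lt x (hrpos (n+1))
      refine ⟨i, ⟨x, hx, hi⟩, ?_⟩
      calc dist (u i) (f q) ≤ dist (u i) x + dist x (f q) := dist_triangle _ _ _
        _ < r (n+1) + r n := by rw [dist_comm] at hi; exact add_lt_add hi hdx
        _ = r n + r (n+1) := by ring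
    refine ⟨fun q => u (Nat.find (hex q)), ?_, ?_, ?_⟩
    · refine Measurable.find (fun i => measurable_const) (fun i => ?_) hex
      have : {q : Γ ⧸ Λ | (∃ y, π y = q ∧ dist y (u i) < r (n+1)) ∧
          dist (u i) (f q) < r n + r (n+1)} =
          {q | ∃ y, π y = q ∧ dist y (u i) < r (n+1)} ∩
          f ⁻¹' (ball (u i) (r n + r (n+1))) := by
        ext q
        simp [mem_ball, dist_comm]
      rw [this]
      exact (hopen (u i) (r (n+1))).inter (hfm (measurableSet_ball))
    · intro q
      obtain ⟨⟨y, hy, hd⟩, _⟩ := Nat.find_spec (hex q)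
      exact ⟨y, hy, hd⟩
    · intro q
      obtain ⟨_, hd⟩ := Nat.find_spec (hex q)
      have h1 : r n + r (n+1) ≤ 2 * r n := by
        have : r (n+1) ≤ r n := by
          apply pow_le_pow_of_le_one (by norm_num) (by norm_num)
          omega
        linarith
      exact le_trans (le_of_lt hd) h1
  -- the sequence of approximations
  let S : ∀ n : ℕ, {f : Γ ⧸ Λ → Γ // Measurable f ∧ Inv n f} := fun n =>
    Nat.rec ⟨base.choose, base.choose_spec⟩
      (fun n fp => ⟨(key n fp.1 fp.2.1 fp.2.2).choose,
        (key n fp.1 fp.2.1 fp.2.2).choose_spec.1,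
        (key n fp.1 fp.2.1 fp.2.2).choose_spec.2.1⟩) n
  have hd : ∀ n q, dist ((S (n+1)).1 q) ((S n).1 q) ≤ 2 * r n := fun n q =>
    (key n (S n).1 (S n).2.1 (S n).2.2).choose_spec.2.2 q
  have cauchy : ∀ q, CauchySeq (fun n => (S n).1 q) := by
    intro q
    apply cauchySeq_of_le_geometric (1/2 : ℝ) 2 (by norm_num)
    intro n
    rw [dist_comm]
    exact hd n q
  have htend : ∀ q, ∃ l, Tendsto (fun n => (S n).1 q) atTop (nhds l) := fun q =>
    cauchySeq_tendsto_of_complete (cauchy q)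
  refine ⟨fun q => (htend q).choose, ?_, ?_⟩
  · exact measurable_of_tendsto_metrizable (fun n => (S n).2.1)
      (tendsto_pi_nhds.2 fun q => (htend q).choose_spec)
  · intro q
    have h1 : Tendsto (fun n => (S n).1 q) atTop (nhds (htend q).choose) :=
      (htend q).choose_spec
    have hx : ∀ n, π ((S n).2.2 q).choose = q ∧
        dist ((S n).2.2 q).choose ((S n).1 q) < r n := fun n => ((S n).2.2 q).choose_spec
    have hxt : Tendsto (fun n => ((S n).2.2 q).choose) atTop (nhds (htend q).choose) := by
      rw [tendsto_iff_dist_tendsto_zero]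
      apply squeeze_zero (fun n => dist_nonneg)
        (g := fun n => r n + dist ((S n).1 q) (htend q).choose)
      · intro n
        calc dist ((S n).2.2 q).choose (htend q).choose
            ≤ dist ((S n).2.2 q).choose ((S n).1 q) + dist ((S n).1 q) (htend q).choose :=
              dist_triangle _ _ _
          _ ≤ r n + dist ((S n).1 q) (htend q).choose := by
              have := (hx n).2; linarith
      · have hA : Tendsto r atTop (nhds 0) := by
          simpa [hr] using tendsto_pow_atTop_nhds_zero_of_lt_one
            (by norm_num : (0:ℝ) ≤ 1/2) (by norm_num : (1/2:ℝ) < 1)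
        have hB : Tendsto (fun n => dist ((S n).1 q) (htend q).choose) atTop (nhds 0) :=
          tendsto_iff_dist_tendsto_zero.1 h1
        simpa using hA.add hB
    exact (hfib_closed q).mem_of_tendsto hxt (Filter.Eventually.of_forall fun n => (hx n).1)

/-- μ is concentrated on a transversal: there is a Borel set D of full measure meeting each
Λ-coset at most once. -/
def ConcentratedOnTransversal {Γ : Type*} [AddCommGroup Γ] [TopologicalSpace Γ]
    [MeasurableSpace Γ] (Λ : AddSubgroup Γ) (μ : Measure Γ) : Prop :=
  ∃ D : Set Γ, MeasurableSet D ∧ μ Dᶜ = 0 ∧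
    ∀ l ∈ Λ, l ≠ (0 : Γ) → D ∩ ((fun t => l + t) '' D) = ∅

/-- for a Polish LCA group Γ, a closed subgroup Λ and a finite Borel measure μ,
μ is concentrated on a transversal iff there is a Borel measurable cross-section
τ : Γ/Λ → Γ such that μ is the image of μπ⁻¹ under τ, i.e.
∫ f dμ = ∫ f∘τ d(μπ⁻¹) for all f ∈ L¹(μ). -/
theorem concentratedOnTransversal_iff_section
    {Γ : Type*} [AddCommGroup Γ] [TopologicalSpace Γ] [IsTopologicalAddGroup Γ]
    [LocallyCompactSpace Γ] [PolishSpace Γ] [MeasurableSpace Γ] [BorelSpace Γ]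
    (Λ : AddSubgroup Γ) (hΛ : IsClosed (Λ : Set Γ)) [BorelSpace (Γ ⧸ Λ)]
    (μ : Measure Γ) [IsFiniteMeasure μ] :
    ConcentratedOnTransversal Λ μ ↔
      ∃ τ : Γ ⧸ Λ → Γ, Measurable τ ∧
        (∀ q : Γ ⧸ Λ, QuotientAddGroup.mk (s := Λ) (τ q) = q) ∧
        ∀ f : Γ → ℂ, Integrable f μ →
          (∫ γ, f γ ∂μ) =
            ∫ q, f (τ q) ∂(μ.map (QuotientAddGroup.mk (s := Λ))) := by
  classical
  haveI : IsClosed ((Λ : Set Γ)) := hΛ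
  set π : Γ → Γ ⧸ Λ := QuotientAddGroup.mk (s := Λ) with hπdef
  have hπc : Continuous π := continuous_quot_mk
  have hπm : Measurable π := hπc.measurable
  constructor
  · rintro ⟨D, hDm, hDnull, hDtrans⟩
    -- the quotient map is injective on D
    have hinj : Set.InjOn π D := by
      intro d hd d' hd' hdd
      by_contra hne
      have hmem : d' - d ∈ Λ := (QuotientAddGroup.eq_iff_sub_mem).1 hdd.symm
      have h1 : d' ∈ (fun t => (d' - d) + t) '' D := ⟨d, hd, by simp⟩
      have h2 : d' ∈ D ∩ ((fun t => (d' - d) + t) '' D) := ⟨hd', h1⟩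
      rw [hDtrans _ hmem (fun h => hne (sub_eq_zero.mp h).symm)] at h2
      exact h2
    obtain ⟨σ, hσm, hσsec⟩ := exists_measurable_cross_section Λ hΛ
    haveI : StandardBorelSpace ↥D := hDm.standardBorel
    set f : ↥D → Γ ⧸ Λ := fun d => π d with hf
    have hfm : Measurable f := hπm.comp measurable_subtype_coe
    have hfinj : Function.Injective f := fun d d' h => Subtype.ext (hinj d.2 d'.2 h)
    have hfemb : MeasurableEmbedding f := hfm.measurableEmbedding hfinj
    obtain ⟨g, hgm, hgf⟩ := hfemb.exists_measurable_extend
      (measurable_subtype_coe) (fun _ => ⟨0⟩)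
    set τ : Γ ⧸ Λ → Γ := fun q => if q ∈ Set.range f then g q else σ q with hτ
    have hτm : Measurable τ := Measurable.ite hfemb.measurableSet_range hgm hσm
    have hτD : ∀ γ, ∀ hγ : γ ∈ D, τ (π γ) = γ := by
      intro γ hγ
      have hmem : π γ ∈ Set.range f := ⟨⟨γ, hγ⟩, rfl⟩
      have h1 : τ (π γ) = g (π γ) := if_pos hmem
      have h2 : g (f ⟨γ, hγ⟩) = (⟨γ, hγ⟩ : ↥D) := congrFun hgf ⟨γ, hγ⟩
      rw [h1]
      exact h2
    have hτsec : ∀ q, π (τ q) = q := by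
      intro q
      by_cases h : q ∈ Set.range f
      · obtain ⟨d, rfl⟩ := h
        have h1 : τ (f d) = g (f d) := if_pos ⟨d, rfl⟩
        have h2 : g (f d) = (d : Γ) := congrFun hgf d
        rw [h1, h2]
      · have h1 : τ q = σ q := if_neg h
        rw [h1]
        exact hσsec q
    refine ⟨τ, hτm, hτsec, ?_⟩
    intro f1 hf1
    have hDae : ∀ᵐ γ ∂μ, γ ∈ D := by
      rw [MeasureTheory.ae_iff]
      exact hDnull
    have hae : (fun γ => τ (π γ)) =ᵐ[μ] id := by
      filter_upwards [hDae] with γ hγ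
      exact hτD γ hγ
    have hmap : (μ.map π).map τ = μ := by
      rw [Measure.map_map hτm hπm]
      calc μ.map (τ ∘ π) = μ.map id := Measure.map_congr hae
        _ = μ := Measure.map_id
    have h0 : AEStronglyMeasurable f1 ((μ.map π).map τ) := by
      rw [hmap]
      exact hf1.aestronglyMeasurable
    have hcomp : AEStronglyMeasurable (f1 ∘ τ) (μ.map π) := h0.comp_measurable hτm
    have heq : (fun γ => f1 (τ (π γ))) =ᵐ[μ] f1 := by
      filter_upwards [hae] with γ h
      simp only [id] at h
      rw [h]
    calc (∫ γ, f1 γ ∂μ) = ∫ γ, f1 (τ (π γ)) ∂μ := (integral_congr_ae heq).symm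
      _ = ∫ q, f1 (τ q) ∂(μ.map π) := (integral_map hπm.aemeasurable hcomp).symm
  · rintro ⟨τ, hτm, hτsec, hτint⟩
    refine ⟨{γ | τ (π γ) = γ}, ?_, ?_, ?_⟩
    · exact measurableSet_eq_fun (hτm.comp hπm) measurable_id
    · -- full measure via the integral identity applied to an indicator
      set D : Set Γ := {γ | τ (π γ) = γ} with hD
      have hDm : MeasurableSet D := measurableSet_eq_fun (hτm.comp hπm) measurable_id
      have hint : Integrable (Dᶜ.indicator fun _ => (1:ℂ)) μ :=
        (integrable_const (1:ℂ)).indicator hDm.compl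
      have h := hτint _ hint
      have hL : (∫ γ, (Dᶜ.indicator fun _ => (1:ℂ)) γ ∂μ) = (μ Dᶜ).toReal • (1:ℂ) := by
        rw [integral_indicator_const _ hDm.compl]; rfl
      have hR : (∫ q, (Dᶜ.indicator fun _ => (1:ℂ)) (τ q) ∂(μ.map π)) = 0 := by
        have : ∀ q, (Dᶜ.indicator fun _ => (1:ℂ)) (τ q) = 0 := by
          intro q
          have : τ q ∈ D := by
            show τ (π (τ q)) = τ q
            rw [hτsec q]
          simp [Set.indicator_of_notMem, this]
        simp [this]
      rw [hL, hR] at h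
      have : (μ Dᶜ).toReal = 0 := by
        have := smul_eq_zero.mp h
        rcases this with h1 | h1
        · exact h1
        · exact absurd h1 one_ne_zero
      exact (ENNReal.toReal_eq_zero_iff _).mp this |>.resolve_right (measure_ne_top μ _)
    · intro l hl hl0
      ext γ
      simp only [Set.mem_inter_iff, Set.mem_image, Set.mem_empty_iff_false, iff_false]
      rintro ⟨hγD, d, hdD, rfl⟩
      have hπeq : π (l + d) = π d := by
        apply (QuotientAddGroup.eq_iff_sub_mem).2
        simpa using hl
      have h1 : τ (π (l + d)) = l + d := hγD
      have h2 : τ (π d) = d := hdD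
      rw [hπeq, h2] at h1
      exact hl0 (right_eq_add.mp h1)
end

section
/- Let G be an LCA group, Γ its dual, H a closed subgroup of G whose annihilator Λ is countable, μ a regular finite non-negative Borel measure on Γ, and α ∈ (0,∞). Then P(H) is dense in L^α(μ) if and only if μ is concentrated on a transversal. -/
open MeasureTheory Set

noncomputable section

variable {G : Type*} [CommGroup G] [TopologicalSpace G] [IsTopologicalGroup G]
  [LocallyCompactSpace G] [T2Space G]

/-! ### Auxiliary material -/

open Pointwise
set_option linter.unusedSectionVars false

namespace DIT

variable {G : Type*} [CommGroup G] [TopologicalSpace G] [IsTopologicalGroup G]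
  [LocallyCompactSpace G] [T2Space G]

/-- A single character function `γ ↦ ⟨γ, y⟩`. -/
def charFn (y : G) : PontryaginDual G → ℂ := fun γ => ((γ y : Circle) : ℂ)

/-- The set of character functions coming from `H`. -/
def charSet (H : Subgroup G) : Set (PontryaginDual G → ℂ) :=
  {f | ∃ y ∈ H, f = charFn y}

lemma trigPoly_eq_span (H : Subgroup G) :
    trigPoly H = ↑(Submodule.span ℂ (charSet H)) := by
  ext p
  constructor
  · rintro ⟨n, a, y, hy, rfl⟩
    rw [SetLike.mem_coe, Submodule.mem_span_set']
    refine ⟨n, a, fun i => ⟨charFn (y i), y i, hy i, rfl⟩, ?_⟩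
    funext γ
    simp [charFn, Finset.sum_apply]
  · intro hp
    rw [SetLike.mem_coe, Submodule.mem_span_set'] at hp
    obtain ⟨n, a, g, hsum⟩ := hp
    choose y hyH hyfn using fun i => (g i).2
    refine ⟨n, a, y, hyH, ?_⟩
    rw [← hsum]
    funext γ
    rw [Finset.sum_apply]
    refine Finset.sum_congr rfl fun i _ => ?_
    rw [hyfn i]
    simp [charFn]

lemma charFn_mem (H : Subgroup G) {y : G} (hy : y ∈ H) : charFn y ∈ trigPoly H := by
  rw [trigPoly_eq_span]
  exact Submodule.subset_span ⟨y, hy, rfl⟩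

lemma trigPoly_zero (H : Subgroup G) : (0 : PontryaginDual G → ℂ) ∈ trigPoly H := by
  rw [trigPoly_eq_span]; exact Submodule.zero_mem _

lemma trigPoly_add {H : Subgroup G} {p q : PontryaginDual G → ℂ}
    (hp : p ∈ trigPoly H) (hq : q ∈ trigPoly H) : p + q ∈ trigPoly H := by
  rw [trigPoly_eq_span] at *; exact Submodule.add_mem _ hp hq

lemma trigPoly_smul {H : Subgroup G} (c : ℂ) {p : PontryaginDual G → ℂ}
    (hp : p ∈ trigPoly H) : c • p ∈ trigPoly H := by
  rw [trigPoly_eq_span] at *; exact Submodule.smul_mem _ _ hp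

lemma trigPoly_sub {H : Subgroup G} {p q : PontryaginDual G → ℂ}
    (hp : p ∈ trigPoly H) (hq : q ∈ trigPoly H) : p - q ∈ trigPoly H := by
  rw [trigPoly_eq_span] at *; exact Submodule.sub_mem _ hp hq

lemma charSet_mul {H : Subgroup G} : charSet H * charSet H ⊆ charSet H := by
  rintro f ⟨g1, hg1, g2, hg2, rfl⟩
  obtain ⟨y1, hy1, rfl⟩ := hg1
  obtain ⟨y2, hy2, rfl⟩ := hg2
  refine ⟨y1 * y2, mul_mem hy1 hy2, ?_⟩
  funext γ
  show (γ y1 : ℂ) * (γ y2 : ℂ) = ((γ (y1 * y2) : Circle) : ℂ)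
  rw [map_mul]
  simp

lemma trigPoly_mul {H : Subgroup G} {p q : PontryaginDual G → ℂ}
    (hp : p ∈ trigPoly H) (hq : q ∈ trigPoly H) : p * q ∈ trigPoly H := by
  rw [trigPoly_eq_span] at *
  have h2 : p * q ∈ Submodule.span ℂ (charSet H) * Submodule.span ℂ (charSet H) :=
    Submodule.mul_mem_mul hp hq
  rw [Submodule.span_mul_span] at h2
  exact Submodule.span_mono charSet_mul h2

lemma trigPoly_const (H : Subgroup G) (c : ℂ) :
    (fun _ : PontryaginDual G => c) ∈ trigPoly H := by
  have h : (fun _ : PontryaginDual G => c) = c • charFn (1 : G) := by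
    funext γ
    simp [charFn]
  rw [h]
  exact trigPoly_smul c (charFn_mem H (one_mem H))

lemma trigPoly_star {H : Subgroup G} {p : PontryaginDual G → ℂ}
    (hp : p ∈ trigPoly H) : (fun γ => (starRingEnd ℂ) (p γ)) ∈ trigPoly H := by
  rw [trigPoly_eq_span] at *
  induction hp using Submodule.span_induction with
  | mem f hf =>
      obtain ⟨y, hy, rfl⟩ := hf
      refine Submodule.subset_span ⟨y⁻¹, inv_mem hy, ?_⟩
      funext γ
      show (starRingEnd ℂ) ((γ y : Circle) : ℂ) = ((γ y⁻¹ : Circle) : ℂ)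
      rw [map_inv, ← Circle.coe_inv_eq_conj]
  | zero =>
      convert Submodule.zero_mem (Submodule.span ℂ (charSet H)) using 1
      simp only [SetLike.mem_coe]
      exact iff_of_eq (congrArg (· ∈ Submodule.span ℂ (charSet H)) (funext fun γ => by simp))
  | add f g _ _ hf hg =>
      have : (fun γ => (starRingEnd ℂ) ((f + g) γ)) =
          (fun γ => (starRingEnd ℂ) (f γ)) + fun γ => (starRingEnd ℂ) (g γ) := by
        funext γ; simp
      rw [this]; exact Submodule.add_mem _ hf hg
  | smul c f _ hf =>
      have : (fun γ => (starRingEnd ℂ) ((c • f) γ)) =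
          (starRingEnd ℂ c) • fun γ => (starRingEnd ℂ) (f γ) := by
        funext γ; simp
      rw [this]; exact Submodule.smul_mem _ _ hf

/-- Trig polynomials are invariant under translation by elements of the annihilator. -/
lemma trigPoly_invariant {H : Subgroup G} {p : PontryaginDual G → ℂ}
    (hp : p ∈ trigPoly H) {l : PontryaginDual G} (hl : l ∈ annihilator H)
    (γ : PontryaginDual G) : p (l * γ) = p γ := by
  obtain ⟨n, a, y, hy, rfl⟩ := hp
  refine Finset.sum_congr rfl fun i _ => ?_
  have : (l * γ) (y i) = l (y i) * γ (y i) := rfl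
  rw [this, hl (y i) (hy i), one_mul]

end DIT

namespace DIT

section SW

variable {G : Type*} [CommGroup G] [TopologicalSpace G] [IsTopologicalGroup G]
  [LocallyCompactSpace G] [T2Space G]

/-- The evaluation map into the compact product space `↥H → Circle`. -/
def Phi (H : Subgroup G) : PontryaginDual G → (↥H → Circle) :=
  fun γ y => γ (y : G)

lemma continuous_eval_dual (y : G) : Continuous fun γ : PontryaginDual G => γ y := by
  have h1 : Continuous fun f : C(G, Circle) => f y := continuous_eval_const y
  exact h1.comp (ContinuousMonoidHom.isInducing_toContinuousMap G Circle).continuous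

lemma continuous_phi (H : Subgroup G) : Continuous (Phi H) :=
  continuous_pi fun y => continuous_eval_dual (y : G)

lemma continuous_circle_coe : Continuous fun z : Circle => (z : ℂ) :=
  continuous_subtype_val

/-- Coordinate functions on the product space. -/
def coordFn (H : Subgroup G) (y : ↥H) : C((↥H → Circle), ℂ) :=
  ⟨fun x => ((x y : Circle) : ℂ), continuous_circle_coe.comp (continuous_apply y)⟩

/-- The star subalgebra of continuous functions whose pullback along `Phi` is a trig
polynomial. -/
def pullSA (H : Subgroup G) : StarSubalgebra ℂ C((↥H → Circle), ℂ) where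
  carrier := {q | (fun γ => q (Phi H γ)) ∈ trigPoly H}
  mul_mem' := fun hq hr => trigPoly_mul hq hr
  add_mem' := fun hq hr => trigPoly_add hq hr
  algebraMap_mem' := fun c => trigPoly_const H c
  star_mem' := fun {q} hq => trigPoly_star hq

lemma coordFn_mem_pullSA (H : Subgroup G) (y : ↥H) : coordFn H y ∈ pullSA H := by
  show (fun γ => ((Phi H γ y : Circle) : ℂ)) ∈ trigPoly H
  exact charFn_mem H y.2

/-- Stone–Weierstrass: any continuous function on the compact product space can be uniformly
approximated by functions whose pullback is a trig polynomial. -/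
lemma exists_trig_near (H : Subgroup G) (u : C((↥H → Circle), ℂ)) (t : ℝ)
    (ht : 0 < t) :
    ∃ q : C((↥H → Circle), ℂ), (fun γ => q (Phi H γ)) ∈ trigPoly H ∧
      ∀ x, ‖u x - q x‖ ≤ t := by
  set A : StarSubalgebra ℂ C((↥H → Circle), ℂ) :=
    StarAlgebra.adjoin ℂ (Set.range (coordFn H)) with hA
  have hsep : A.SeparatesPoints := by
    intro x y hxy
    have : ∃ y0, x y0 ≠ y y0 := by
      by_contra hcon
      push_neg at hcon
      exact hxy (funext hcon)
    obtain ⟨y0, hy0⟩ := this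
    refine ⟨_, ⟨coordFn H y0, StarAlgebra.subset_adjoin ℂ _ ⟨y0, rfl⟩, rfl⟩, ?_⟩
    simp only [coordFn, ContinuousMap.coe_mk]
    exact fun h => hy0 (Subtype.ext h)
  have htop := ContinuousMap.starSubalgebra_topologicalClosure_eq_top_of_separatesPoints A hsep
  have humem : u ∈ A.topologicalClosure := htop ▸ trivial
  have hclos : u ∈ closure (A : Set C((↥H → Circle), ℂ)) := humem
  rw [Metric.mem_closure_iff] at hclos
  obtain ⟨q, hqA, hq⟩ := hclos t ht
  have hle : A ≤ pullSA H := StarAlgebra.adjoin_le (by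
    rintro _ ⟨y0, rfl⟩
    exact coordFn_mem_pullSA H y0)
  refine ⟨q, hle hqA, fun x => ?_⟩
  calc ‖u x - q x‖ = dist (u x) (q x) := (dist_eq_norm (u x) (q x)).symm
    _ ≤ dist u q := ContinuousMap.dist_apply_le_dist x
    _ ≤ t := le_of_lt hq

end SW

end DIT

open scoped ENNReal NNReal

namespace DIT

lemma ennreal_small (α : ℝ) (hα : 0 < α) (c : ℝ≥0∞) (hc : c ≠ ⊤) {ε : ℝ≥0∞} (hε : 0 < ε) :
    ∃ t : ℝ, 0 < t ∧ t ≤ 1 ∧ (ENNReal.ofReal t) ^ α * c < ε := by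
  by_cases hεtop : ε = ⊤
  · refine ⟨1, one_pos, le_refl 1, ?_⟩
    rw [hεtop]
    calc (ENNReal.ofReal 1) ^ α * c ≤ 1 * c := by
          rw [ENNReal.ofReal_one, ENNReal.one_rpow]
      _ = c := one_mul c
      _ < ⊤ := hc.lt_top
  · set s : ℝ≥0∞ := min ((ε / 2) / (c + 1)) 1 with hs
    have hεhalf : (0 : ℝ≥0∞) < ε / 2 := ENNReal.div_pos hε.ne' (by norm_num)
    have hs0 : 0 < s := lt_min (ENNReal.div_pos hεhalf.ne' (by
      simp [ENNReal.add_ne_top, hc])) one_pos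
    have hstop : s ≠ ⊤ := ne_top_of_le_ne_top ENNReal.one_ne_top (min_le_right _ _)
    set t' : ℝ≥0∞ := s ^ (1 / α) with ht'
    have ht'pow : t' ^ α = s := by
      rw [ht', ← ENNReal.rpow_mul, one_div_mul_cancel hα.ne', ENNReal.rpow_one]
    have ht'le : t' ≤ 1 := ENNReal.rpow_le_one (min_le_right _ _) (by positivity)
    have ht'top : t' ≠ ⊤ := ne_top_of_le_ne_top ENNReal.one_ne_top ht'le
    have ht'0 : 0 < t' := ENNReal.rpow_pos hs0 hstop
    refine ⟨t'.toReal, ENNReal.toReal_pos ht'0.ne' ht'top, ?_, ?_⟩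
    · have := ENNReal.toReal_mono ENNReal.one_ne_top ht'le
      simpa using this
    · rw [ENNReal.ofReal_toReal ht'top, ht'pow]
      calc s * c ≤ ((ε / 2) / (c + 1)) * (c + 1) :=
            mul_le_mul' (min_le_left _ _) le_self_add
        _ = (c + 1) * ((ε / 2) / (c + 1)) := mul_comm _ _
        _ ≤ ε / 2 := ENNReal.mul_div_le
        _ < ε := ENNReal.half_lt_self hε.ne' hεtop

lemma rpow_add_le_two_rpow (a b : ℝ≥0∞) {α : ℝ} (hα : 0 < α) :
    (a + b) ^ α ≤ 2 ^ α * (a ^ α + b ^ α) := by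
  rcases le_total a b with h | h
  · calc (a + b) ^ α ≤ (2 * b) ^ α := by
          refine ENNReal.rpow_le_rpow ?_ hα.le
          rw [two_mul]; exact add_le_add_left h b
      _ = 2 ^ α * b ^ α := ENNReal.mul_rpow_of_nonneg 2 b hα.le
      _ ≤ 2 ^ α * (a ^ α + b ^ α) := mul_le_mul_right le_add_self _
  · calc (a + b) ^ α ≤ (2 * a) ^ α := by
          refine ENNReal.rpow_le_rpow ?_ hα.le
          rw [two_mul]; exact add_le_add_right h a
      _ = 2 ^ α * a ^ α := ENNReal.mul_rpow_of_nonneg 2 a hα.le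
      _ ≤ 2 ^ α * (a ^ α + b ^ α) := mul_le_mul_right le_self_add _

variable {G : Type*} [CommGroup G] [TopologicalSpace G] [IsTopologicalGroup G]
  [LocallyCompactSpace G] [T2Space G]

lemma phi_inj_on {H : Subgroup G} {D : Set (PontryaginDual G)}
    (hDtrans : ∀ l ∈ annihilator H, l ≠ (1 : PontryaginDual G) →
      D ∩ ((fun t => l * t) '' D) = ∅)
    {γ₁ γ₂ : PontryaginDual G} (h1 : γ₁ ∈ D) (h2 : γ₂ ∈ D) (hΦ : Phi H γ₁ = Phi H γ₂) :
    γ₁ = γ₂ := by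
  by_contra hne
  set l := γ₁ * γ₂⁻¹ with hl
  have hval : ∀ y ∈ H, γ₁ y = γ₂ y := fun y hy => congrFun hΦ ⟨y, hy⟩
  have hlann : l ∈ annihilator H := by
    intro y hy
    show γ₁ y * (γ₂ y)⁻¹ = 1
    rw [hval y hy, mul_inv_cancel]
  have hl1 : l ≠ 1 := fun h => hne (mul_inv_eq_one.mp h)
  have hmem : γ₁ ∈ D ∩ ((fun t => l * t) '' D) :=
    ⟨h1, ⟨γ₂, h2, by show l * γ₂ = γ₁; rw [hl]; exact inv_mul_cancel_right γ₁ γ₂⟩⟩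
  rw [hDtrans l hlann hl1] at hmem
  exact hmem

section Approx

variable [MeasurableSpace (PontryaginDual G)] [BorelSpace (PontryaginDual G)]

lemma approx_indicator {H : Subgroup G}
    {μ : Measure (PontryaginDual G)} [IsFiniteMeasure μ] (hreg : PaperRegular μ)
    {α : ℝ} (hα : 0 < α)
    {D : Set (PontryaginDual G)} (hDm : MeasurableSet D) (hDnull : μ Dᶜ = 0)
    (hDtrans : ∀ l ∈ annihilator H, l ≠ (1 : PontryaginDual G) →
      D ∩ ((fun t => l * t) '' D) = ∅)
    (c : ℂ) {B : Set (PontryaginDual G)} (hB : MeasurableSet B)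
    {ε : ℝ≥0∞} (hε : 0 < ε) :
    ∃ p ∈ trigPoly H,
      (∫⁻ x, (‖B.indicator (fun _ => c) x - p x‖₊ : ℝ≥0∞) ^ α ∂μ) < ε := by
  set g : PontryaginDual G → ℂ := B.indicator (fun _ => c) with hg
  set Rb : ℝ≥0 := 2 * ‖c‖₊ + 1 with hRb
  have hRbα_ne_top : ((Rb : ℝ≥0∞)) ^ α ≠ ⊤ :=
    ENNReal.rpow_ne_top_of_nonneg hα.le ENNReal.coe_ne_top
  have hRbα_ne_zero : ((Rb : ℝ≥0∞)) ^ α ≠ 0 := by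
    refine (ENNReal.rpow_pos ?_ ENNReal.coe_ne_top).ne'
    have h0 : (0 : ℝ≥0) < Rb := by rw [hRb]; positivity
    exact_mod_cast h0
  have hεhalf : (0 : ℝ≥0∞) < ε / 2 := ENNReal.div_pos hε.ne' (by norm_num)
  -- choose the uniform approximation threshold t
  obtain ⟨t, ht0, ht1, htb⟩ := ennreal_small α hα (μ Set.univ) (measure_ne_top μ _) hεhalf
  -- choose the measure slack δ
  set δ : ℝ≥0∞ := (ε / 2) / (2 * (Rb : ℝ≥0∞) ^ α) with hδ
  have hδ0 : 0 < δ :=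
    ENNReal.div_pos hεhalf.ne' (ENNReal.mul_ne_top (by norm_num) hRbα_ne_top)
  -- inner compact approximations
  obtain ⟨C1, U1, hC1cpt, _, hC1sub, hBU1, hm1⟩ := hreg (B ∩ D) (hB.inter hDm) δ hδ0
  obtain ⟨C2, U2, hC2cpt, _, hC2sub, hBU2, hm2⟩ := hreg (Bᶜ ∩ D) (hB.compl.inter hDm) δ hδ0
  have hμ1 : μ ((B ∩ D) \ C1) < δ := lt_of_le_of_lt
    (measure_mono (Set.diff_subset_diff_left hBU1)) hm1
  have hμ2 : μ ((Bᶜ ∩ D) \ C2) < δ := lt_of_le_of_lt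
    (measure_mono (Set.diff_subset_diff_left hBU2)) hm2
  set K : Set (PontryaginDual G) := C1 ∪ C2 with hK
  have hKm : MeasurableSet K := ((hC1cpt.union hC2cpt).isClosed).measurableSet
  have hKc : μ Kᶜ < δ + δ := by
    have hsub : Kᶜ ⊆ Dᶜ ∪ (((B ∩ D) \ C1) ∪ ((Bᶜ ∩ D) \ C2)) := by
      intro x hx
      by_cases hxD : x ∈ D
      · by_cases hxB : x ∈ B
        · exact Or.inr (Or.inl ⟨⟨hxB, hxD⟩, fun h => hx (Or.inl h)⟩)
        · exact Or.inr (Or.inr ⟨⟨hxB, hxD⟩, fun h => hx (Or.inr h)⟩)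
      · exact Or.inl hxD
    calc μ Kᶜ ≤ μ Dᶜ + (μ ((B ∩ D) \ C1) + μ ((Bᶜ ∩ D) \ C2)) :=
          le_trans (measure_mono hsub) (le_trans (measure_union_le _ _)
            (add_le_add_right (measure_union_le _ _) _))
      _ = μ ((B ∩ D) \ C1) + μ ((Bᶜ ∩ D) \ C2) := by rw [hDnull, zero_add]
      _ < δ + δ := ENNReal.add_lt_add hμ1 hμ2
  -- disjoint compact images
  have hdisj : Disjoint (Phi H '' C1) (Phi H '' C2) := by
    rw [Set.disjoint_left]
    rintro a ⟨γ₁, hγ₁, rfl⟩ ⟨γ₂, hγ₂, hΦ⟩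
    have heq : γ₁ = γ₂ := phi_inj_on hDtrans (hC1sub hγ₁).2 (hC2sub hγ₂).2 hΦ.symm
    exact (hC2sub hγ₂).1 (heq ▸ (hC1sub hγ₁).1)
  have hcl1 : IsClosed (Phi H '' C1) := (hC1cpt.image (continuous_phi H)).isClosed
  have hcl2 : IsClosed (Phi H '' C2) := (hC2cpt.image (continuous_phi H)).isClosed
  -- Urysohn
  obtain ⟨u0, hu0zero, hu0one, hu0mem⟩ :=
    exists_continuous_zero_one_of_isClosed hcl2 hcl1 hdisj.symm
  set u : C(↥H → Circle, ℂ) :=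
    c • ⟨fun x => ((u0 x : ℝ) : ℂ), Complex.continuous_ofReal.comp u0.continuous⟩ with hu
  have hu_norm : ∀ x, ‖u x‖ ≤ ‖c‖ := by
    intro x
    have : ‖u x‖ = ‖c‖ * |u0 x| := by
      simp [hu, norm_smul, Complex.norm_real]
    rw [this]
    have h01 := hu0mem x
    have : |u0 x| ≤ 1 := abs_le.mpr ⟨by linarith [h01.1], h01.2⟩
    calc ‖c‖ * |u0 x| ≤ ‖c‖ * 1 := by
          exact mul_le_mul_of_nonneg_left this (norm_nonneg c)
      _ = ‖c‖ := mul_one _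
  -- Stone–Weierstrass
  obtain ⟨q, hqtrig, hqt⟩ := exists_trig_near H u t ht0
  set p : PontryaginDual G → ℂ := fun γ => q (Phi H γ) with hp
  refine ⟨p, hqtrig, ?_⟩
  -- pointwise bounds
  have hbd_p : ∀ x, ‖p x‖ ≤ ‖c‖ + 1 := by
    intro x
    calc ‖p x‖ = ‖u (Phi H x) - (u (Phi H x) - q (Phi H x))‖ := by ring_nf; rfl
      _ ≤ ‖u (Phi H x)‖ + ‖u (Phi H x) - q (Phi H x)‖ := norm_sub_le _ _
      _ ≤ ‖c‖ + t := add_le_add (hu_norm _) (hqt _)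
      _ ≤ ‖c‖ + 1 := add_le_add_right ht1 _
  have hbd_all : ∀ x, ‖g x - p x‖ ≤ (Rb : ℝ) := by
    intro x
    have hgx : ‖g x‖ ≤ ‖c‖ := by
      rw [hg]
      by_cases hxB : x ∈ B
      · rw [Set.indicator_of_mem hxB]
      · rw [Set.indicator_of_notMem hxB]; simp [norm_nonneg]
    calc ‖g x - p x‖ ≤ ‖g x‖ + ‖p x‖ := norm_sub_le _ _
      _ ≤ ‖c‖ + (‖c‖ + 1) := add_le_add hgx (hbd_p x)
      _ = (Rb : ℝ) := by simp [hRb]; ring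
  have hbd_K : ∀ x ∈ K, ‖g x - p x‖ ≤ t := by
    intro x hx
    rcases hx with hx1 | hx2
    · have hxB : x ∈ B := (hC1sub hx1).1
      have hgx : g x = c := Set.indicator_of_mem hxB _
      have hux : u (Phi H x) = c := by
        have h1 : u0 (Phi H x) = 1 := hu0one ⟨x, hx1, rfl⟩
        simp [hu, h1]
      rw [hgx, ← hux]
      exact hqt _
    · have hxB : x ∈ Bᶜ := (hC2sub hx2).1
      have hgx : g x = 0 := Set.indicator_of_notMem hxB _
      have hux : u (Phi H x) = 0 := by
        have h1 : u0 (Phi H x) = 0 := hu0zero ⟨x, hx2, rfl⟩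
        simp [hu, h1]
      rw [hgx, ← hux]
      simpa using hqt (Phi H x)
  -- pointwise ENNReal bound
  have hpt : ∀ x, (‖g x - p x‖₊ : ℝ≥0∞) ^ α ≤
      (ENNReal.ofReal t) ^ α + Kᶜ.indicator (fun _ => ((Rb : ℝ≥0∞)) ^ α) x := by
    intro x
    by_cases hx : x ∈ K
    · have h1 : (‖g x - p x‖₊ : ℝ≥0∞) ≤ ENNReal.ofReal t := by
        rw [show ((‖g x - p x‖₊ : ℝ≥0∞)) = ENNReal.ofReal ‖g x - p x‖ from (ofReal_norm _).symm]
        exact ENNReal.ofReal_le_ofReal (hbd_K x hx)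
      have h2 : Kᶜ.indicator (fun _ => ((Rb : ℝ≥0∞)) ^ α) x = 0 :=
        Set.indicator_of_notMem (by simpa using hx) _
      rw [h2, add_zero]
      exact ENNReal.rpow_le_rpow h1 hα.le
    · have h1 : (‖g x - p x‖₊ : ℝ≥0∞) ≤ (Rb : ℝ≥0∞) := by
        rw [show ((‖g x - p x‖₊ : ℝ≥0∞)) = ENNReal.ofReal ‖g x - p x‖ from (ofReal_norm _).symm]
        refine le_trans (ENNReal.ofReal_le_ofReal (hbd_all x)) ?_
        rw [ENNReal.ofReal_coe_nnreal]
      have h2 : Kᶜ.indicator (fun _ => ((Rb : ℝ≥0∞)) ^ α) x = ((Rb : ℝ≥0∞)) ^ α :=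
        Set.indicator_of_mem (by simpa using hx) _
      rw [h2]
      exact le_trans (ENNReal.rpow_le_rpow h1 hα.le) (self_le_add_left _ _)
  -- integrate
  calc (∫⁻ x, (‖g x - p x‖₊ : ℝ≥0∞) ^ α ∂μ)
      ≤ ∫⁻ x, ((ENNReal.ofReal t) ^ α +
          Kᶜ.indicator (fun _ => ((Rb : ℝ≥0∞)) ^ α) x) ∂μ := lintegral_mono hpt
    _ = (ENNReal.ofReal t) ^ α * μ Set.univ + ((Rb : ℝ≥0∞)) ^ α * μ Kᶜ := by
        rw [lintegral_add_left measurable_const, lintegral_const,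
          lintegral_indicator hKm.compl, setLIntegral_const]
    _ < ε / 2 + ε / 2 := by
        refine ENNReal.add_lt_add htb ?_
        calc ((Rb : ℝ≥0∞)) ^ α * μ Kᶜ < ((Rb : ℝ≥0∞)) ^ α * (δ + δ) := by
              rw [ENNReal.mul_lt_mul_iff_right hRbα_ne_zero hRbα_ne_top]
              exact hKc
          _ = (2 * ((Rb : ℝ≥0∞)) ^ α) * δ := by ring
          _ ≤ ε / 2 := by
              rw [hδ]
              exact ENNReal.mul_div_le
    _ = ε := ENNReal.add_halves ε

end Approx

end DIT

namespace DIT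

open scoped ENNReal NNReal

lemma ennreal_two_rpow_ne_top {α : ℝ} (hα : 0 < α) : (2 : ℝ≥0∞) ^ α ≠ ⊤ :=
  ENNReal.rpow_ne_top_of_nonneg hα.le (by norm_num)

lemma ennreal_two_rpow_ne_zero {α : ℝ} (hα : 0 < α) : (2 : ℝ≥0∞) ^ α ≠ 0 :=
  (ENNReal.rpow_pos (by norm_num) (by norm_num)).ne'

/-- the splitting threshold -/
noncomputable def eta (α : ℝ) (ε : ℝ≥0∞) : ℝ≥0∞ := (min ε 1) / ((2:ℝ≥0∞) ^ α * 2)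

lemma eta_pos {α : ℝ} (hα : 0 < α) {ε : ℝ≥0∞} (hε : 0 < ε) : 0 < eta α ε := by
  exact ENNReal.div_pos (lt_min hε one_pos).ne'
    (ENNReal.mul_ne_top (ennreal_two_rpow_ne_top hα) (by norm_num))

lemma eta_ne_top {α : ℝ} (hα : 0 < α) (ε : ℝ≥0∞) : eta α ε ≠ ⊤ := by
  refine (ENNReal.div_lt_top ?_ ?_).ne
  · exact ne_top_of_le_ne_top ENNReal.one_ne_top (min_le_right _ _)
  · exact mul_ne_zero (ennreal_two_rpow_ne_zero hα) (by norm_num)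

lemma two_rpow_combine {α : ℝ} (hα : 0 < α) {ε e₁ e₂ : ℝ≥0∞}
    (h₁ : e₁ < eta α ε) (h₂ : e₂ < eta α ε) :
    (2:ℝ≥0∞) ^ α * (e₁ + e₂) < ε := by
  have hη : eta α ε ≠ ⊤ := eta_ne_top hα ε
  calc (2:ℝ≥0∞) ^ α * (e₁ + e₂) < (2:ℝ≥0∞) ^ α * (eta α ε + eta α ε) := by
        rw [ENNReal.mul_lt_mul_iff_right (ennreal_two_rpow_ne_zero hα) (ennreal_two_rpow_ne_top hα)]
        exact ENNReal.add_lt_add h₁ h₂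
    _ = ((2:ℝ≥0∞) ^ α * 2) * eta α ε := by ring
    _ ≤ min ε 1 := ENNReal.mul_div_le
    _ ≤ ε := min_le_left _ _

lemma lintegral_rpow_triangle {X : Type*} [MeasurableSpace X] (μ : Measure X)
    {α : ℝ} (hα : 0 < α) (f₁ f₂ : X → ℂ) (hm : Measurable f₁) :
    ∫⁻ x, (‖f₁ x + f₂ x‖₊ : ℝ≥0∞) ^ α ∂μ ≤
      (2:ℝ≥0∞) ^ α * ((∫⁻ x, (‖f₁ x‖₊ : ℝ≥0∞) ^ α ∂μ) + ∫⁻ x, (‖f₂ x‖₊ : ℝ≥0∞) ^ α ∂μ) := by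
  have hpt : ∀ x, (‖f₁ x + f₂ x‖₊ : ℝ≥0∞) ^ α ≤
      (2:ℝ≥0∞) ^ α * ((‖f₁ x‖₊ : ℝ≥0∞) ^ α + (‖f₂ x‖₊ : ℝ≥0∞) ^ α) := by
    intro x
    refine le_trans ?_ (rpow_add_le_two_rpow _ _ hα)
    refine ENNReal.rpow_le_rpow ?_ hα.le
    calc ((‖f₁ x + f₂ x‖₊ : ℝ≥0∞)) ≤ ((‖f₁ x‖₊ + ‖f₂ x‖₊ : ℝ≥0) : ℝ≥0∞) := by
          exact_mod_cast nnnorm_add_le _ _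
      _ = (‖f₁ x‖₊ : ℝ≥0∞) + (‖f₂ x‖₊ : ℝ≥0∞) := by rw [ENNReal.coe_add]
  calc ∫⁻ x, (‖f₁ x + f₂ x‖₊ : ℝ≥0∞) ^ α ∂μ
      ≤ ∫⁻ x, (2:ℝ≥0∞) ^ α * ((‖f₁ x‖₊ : ℝ≥0∞) ^ α + (‖f₂ x‖₊ : ℝ≥0∞) ^ α) ∂μ :=
        lintegral_mono hpt
    _ = (2:ℝ≥0∞) ^ α * ∫⁻ x, ((‖f₁ x‖₊ : ℝ≥0∞) ^ α + (‖f₂ x‖₊ : ℝ≥0∞) ^ α) ∂μ :=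
        lintegral_const_mul' _ _ (ennreal_two_rpow_ne_top hα)
    _ = (2:ℝ≥0∞) ^ α * ((∫⁻ x, (‖f₁ x‖₊ : ℝ≥0∞) ^ α ∂μ) + ∫⁻ x, (‖f₂ x‖₊ : ℝ≥0∞) ^ α ∂μ) := by
        rw [lintegral_add_left (hm.nnnorm.coe_nnreal_ennreal.pow_const α)]

variable {G : Type*} [CommGroup G] [TopologicalSpace G] [IsTopologicalGroup G]
  [LocallyCompactSpace G] [T2Space G]

lemma trigPoly_continuous {H : Subgroup G} {p : PontryaginDual G → ℂ}
    (hp : p ∈ trigPoly H) : Continuous p := by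
  obtain ⟨n, a, y, _, rfl⟩ := hp
  exact continuous_finset_sum _ fun i _ =>
    continuous_const.mul (continuous_circle_coe.comp (continuous_eval_dual (y i)))

section Suff

variable [MeasurableSpace (PontryaginDual G)] [BorelSpace (PontryaginDual G)]

/-- approximability of a function by trig polynomials -/
def Apx (H : Subgroup G) (μ : Measure (PontryaginDual G)) (α : ℝ)
    (g : PontryaginDual G → ℂ) : Prop :=
  Measurable g ∧ ∀ ε : ℝ≥0∞, 0 < ε →
    ∃ p ∈ trigPoly H, (∫⁻ x, (‖g x - p x‖₊ : ℝ≥0∞) ^ α ∂μ) < ε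

lemma apx_add {H : Subgroup G} {μ : Measure (PontryaginDual G)} {α : ℝ} (hα : 0 < α)
    {g₁ g₂ : PontryaginDual G → ℂ}
    (h₁ : Apx H μ α g₁) (h₂ : Apx H μ α g₂) : Apx H μ α (g₁ + g₂) := by
  refine ⟨h₁.1.add h₂.1, fun ε hε => ?_⟩
  obtain ⟨p₁, hp₁, he₁⟩ := h₁.2 (eta α ε) (eta_pos hα hε)
  obtain ⟨p₂, hp₂, he₂⟩ := h₂.2 (eta α ε) (eta_pos hα hε)
  refine ⟨p₁ + p₂, trigPoly_add hp₁ hp₂, ?_⟩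
  have hkey : ∀ x, (g₁ + g₂) x - (p₁ + p₂) x = (g₁ x - p₁ x) + (g₂ x - p₂ x) := by
    intro x; simp; ring
  calc ∫⁻ x, (‖(g₁ + g₂) x - (p₁ + p₂) x‖₊ : ℝ≥0∞) ^ α ∂μ
      = ∫⁻ x, (‖(g₁ x - p₁ x) + (g₂ x - p₂ x)‖₊ : ℝ≥0∞) ^ α ∂μ := by
        refine lintegral_congr fun x => by rw [hkey x]
    _ ≤ (2:ℝ≥0∞) ^ α * ((∫⁻ x, (‖g₁ x - p₁ x‖₊ : ℝ≥0∞) ^ α ∂μ) +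
          ∫⁻ x, (‖g₂ x - p₂ x‖₊ : ℝ≥0∞) ^ α ∂μ) :=
        lintegral_rpow_triangle μ hα _ _ (h₁.1.sub (trigPoly_continuous hp₁).measurable)
    _ < ε := two_rpow_combine hα he₁ he₂

lemma sufficiency {H : Subgroup G}
    {μ : Measure (PontryaginDual G)} [IsFiniteMeasure μ] (hreg : PaperRegular μ)
    {α : ℝ} (hα : 0 < α)
    (hconc : ConcOnTransversal (annihilator H) μ) : DenseInLp μ α (trigPoly H) := by
  obtain ⟨D, hDm, hDnull, hDtrans⟩ := hconc
  -- every simple function is approximable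
  have hsimple : ∀ s : SimpleFunc (PontryaginDual G) ℂ, Apx H μ α ⇑s := by
    intro s
    induction s using SimpleFunc.induction with
    | const c hs =>
        rename_i sSet
        constructor
        · exact (SimpleFunc.piecewise sSet hs (SimpleFunc.const _ c)
            (SimpleFunc.const _ 0)).measurable
        · intro ε hε
          have hcoe : ⇑(SimpleFunc.piecewise sSet hs (SimpleFunc.const _ c)
              (SimpleFunc.const _ 0)) = sSet.indicator (fun _ => c) := by
            rw [SimpleFunc.coe_piecewise]
            simp only [SimpleFunc.coe_const]
            funext x
            by_cases hx : x ∈ sSet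
            · classical rw [Set.piecewise_eq_of_mem _ _ _ hx, Set.indicator_of_mem hx]; rfl
            · classical rw [Set.piecewise_eq_of_notMem _ _ _ hx, Set.indicator_of_notMem hx]; rfl
          rw [hcoe]
          exact approx_indicator hreg hα hDm hDnull hDtrans c hs hε
    | @add f g _ hf hg =>
        have : ⇑(f + g) = ⇑f + ⇑g := by ext x; simp
        rw [this]
        exact apx_add hα hf hg
  -- now the general case
  intro g hg hint ε hε
  set pE : ℝ≥0∞ := ENNReal.ofReal α with hpE
  have hpE0 : pE ≠ 0 := by
    simp [hpE, ENNReal.ofReal_eq_zero, not_le, hα]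
  have hpEtop : pE ≠ ⊤ := ENNReal.ofReal_ne_top
  have hpEtoReal : pE.toReal = α := ENNReal.toReal_ofReal hα.le
  have help : eLpNorm g pE μ = (∫⁻ x, (‖g x‖₊ : ℝ≥0∞) ^ α ∂μ) ^ (1/α) := by
    rw [eLpNorm_eq_lintegral_rpow_enorm_toReal hpE0 hpEtop, hpEtoReal]
    rfl
  have hmem : MemLp g pE μ := by
    refine ⟨hg.aestronglyMeasurable, ?_⟩
    rw [help]
    exact ENNReal.rpow_lt_top_of_nonneg (by positivity) hint.ne
  have hη : 0 < eta α ε := eta_pos hα hε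
  have hη' : (eta α ε) ^ (1/α) ≠ 0 := by
    refine (ENNReal.rpow_pos hη (eta_ne_top hα ε)).ne'
  obtain ⟨s, hsnear, _⟩ := hmem.exists_simpleFunc_eLpNorm_sub_lt hpEtop hη'
  have h1 : (∫⁻ x, (‖g x - s x‖₊ : ℝ≥0∞) ^ α ∂μ) < eta α ε := by
    have heq : eLpNorm (g - ⇑s) pE μ = (∫⁻ x, (‖g x - s x‖₊ : ℝ≥0∞) ^ α ∂μ) ^ (1/α) := by
      rw [eLpNorm_eq_lintegral_rpow_enorm_toReal hpE0 hpEtop, hpEtoReal]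
      rfl
    have hlt : (∫⁻ x, (‖g x - s x‖₊ : ℝ≥0∞) ^ α ∂μ) ^ (1/α) < (eta α ε) ^ (1/α) := by
      rw [← heq]; exact hsnear
    have := ENNReal.rpow_lt_rpow hlt hα
    rwa [← ENNReal.rpow_mul, ← ENNReal.rpow_mul, one_div_mul_cancel hα.ne',
      ENNReal.rpow_one, ENNReal.rpow_one] at this
  obtain ⟨p, hp, h2⟩ := (hsimple s).2 (eta α ε) hη
  refine ⟨p, hp, ?_⟩
  have hkey : ∀ x, g x - p x = (g x - s x) + (s x - p x) := fun x => by ring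
  calc ∫⁻ x, (‖g x - p x‖₊ : ℝ≥0∞) ^ α ∂μ
      = ∫⁻ x, (‖(g x - s x) + (s x - p x)‖₊ : ℝ≥0∞) ^ α ∂μ := by
        refine lintegral_congr fun x => by rw [hkey x]
    _ ≤ (2:ℝ≥0∞) ^ α * ((∫⁻ x, (‖g x - s x‖₊ : ℝ≥0∞) ^ α ∂μ) +
          ∫⁻ x, (‖s x - p x‖₊ : ℝ≥0∞) ^ α ∂μ) :=
        lintegral_rpow_triangle μ hα _ _ (hg.sub s.measurable)
    _ < ε := two_rpow_combine hα h1 h2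

end Suff

end DIT

namespace DIT

open scoped ENNReal NNReal

variable {G : Type*} [CommGroup G] [TopologicalSpace G] [IsTopologicalGroup G]
  [LocallyCompactSpace G] [T2Space G]

section Nec

variable [MeasurableSpace (PontryaginDual G)] [BorelSpace (PontryaginDual G)]

/-- If the trig polynomials are dense, then `μ` is singular to each of its nontrivial
translates by elements of the annihilator. -/
lemma sing_of_dense {H : Subgroup G}
    {μ : Measure (PontryaginDual G)} [IsFiniteMeasure μ] (hreg : PaperRegular μ)
    {α : ℝ} (hα : 0 < α) (hdense : DenseInLp μ α (trigPoly H))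
    {l : PontryaginDual G} (hl : l ∈ annihilator H) (hl1 : l ≠ 1) :
    μ ⟂ₘ Measure.map (fun γ => l * γ) μ := by
  set τ : PontryaginDual G → PontryaginDual G := fun γ => l * γ with hτ
  have hτc : Continuous τ := continuous_const.mul continuous_id
  have hτm : Measurable τ := hτc.measurable
  set ν := Measure.map τ μ with hν
  have hνfin : IsFiniteMeasure ν := by
    constructor
    rw [hν, Measure.map_apply hτm MeasurableSet.univ]
    exact measure_lt_top μ _
  by_contra hns
  set f := ν.rnDeriv μ with hf
  have hfmeas : Measurable f := Measure.measurable_rnDeriv ν μ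
  have hdecomp : ν.singularPart μ + μ.withDensity f = ν :=
    Measure.singularPart_add_rnDeriv ν μ
  set ξ := μ.withDensity f with hξdef
  have hξ : ξ ≠ 0 := by
    intro h0
    apply hns
    have hthis : μ ⟂ₘ (ν.singularPart μ + ξ) := by
      rw [h0, add_zero]
      exact (Measure.mutuallySingular_singularPart ν μ).symm
    rwa [hdecomp] at hthis
  have hξpos : 0 < ξ Set.univ := Measure.measure_univ_pos.mpr hξ
  -- find M with positive mass on {f ≤ M}
  have hT : μ {x | f x = ⊤} = 0 := by
    have := Measure.rnDeriv_lt_top ν μ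
    rw [MeasureTheory.ae_iff] at this
    convert this using 2
    ext x
    simp [lt_top_iff_ne_top, hf]
  have hξT : ξ {x | f x = ⊤} = 0 := withDensity_absolutelyContinuous μ f hT
  set F : ℕ → Set (PontryaginDual G) := fun M => {x | f x ≤ (M : ℝ≥0∞)} with hFdef
  have hFmeas : ∀ M : ℕ, MeasurableSet (F M) := fun M => hfmeas measurableSet_Iic
  have hcoverT : {x | f x = ⊤}ᶜ ⊆ ⋃ M : ℕ, F M := by
    intro x hx
    simp only [Set.mem_compl_iff, Set.mem_setOf_eq] at hx
    obtain ⟨M, hM⟩ := ENNReal.exists_nat_gt hx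
    exact Set.mem_iUnion.mpr ⟨M, le_of_lt hM⟩
  have hposU : 0 < ξ (⋃ M : ℕ, F M) := by
    have h1 : ξ Set.univ ≤ ξ {x | f x = ⊤} + ξ ({x | f x = ⊤}ᶜ) :=
      le_trans (measure_mono (by simp)) (measure_union_le _ _)
    rw [hξT, zero_add] at h1
    exact lt_of_lt_of_le hξpos (le_trans h1 (measure_mono hcoverT))
  have hexM : ∃ M : ℕ, 0 < ξ (F M) := by
    by_contra hcon
    push_neg at hcon
    have : ξ (⋃ M : ℕ, F M) = 0 :=
      measure_iUnion_null fun M => le_antisymm (hcon M) zero_le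
    exact hposU.ne' this
  obtain ⟨M, hM⟩ := hexM
  -- the absolutely continuous overlap piece with bounded density
  set ω : Measure (PontryaginDual G) := μ.withDensity ((F M).indicator f) with hω
  set Mb : ℝ≥0∞ := (M : ℝ≥0∞) + 1 with hMb
  have hMb0 : Mb ≠ 0 := by simp [hMb]
  have hMbtop : Mb ≠ ⊤ := by simp [hMb]
  have hω_le : ω ≤ Mb • μ := by
    rw [hω, ← withDensity_const]
    refine withDensity_mono (Filter.Eventually.of_forall fun x => ?_)
    by_cases hx : x ∈ F M
    · rw [Set.indicator_of_mem hx]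
      exact le_trans hx (by rw [hMb]; exact le_self_add)
    · rw [Set.indicator_of_notMem hx]; exact zero_le
  have hω_le_ν : ω ≤ ν := by
    refine le_trans ?_ (hdecomp ▸ Measure.le_add_left (le_refl ξ))
    rw [hω, hξdef]
    exact withDensity_mono (Filter.Eventually.of_forall fun x => Set.indicator_le_self _ _ x)
  have hωuniv : ω Set.univ = ξ (F M) := by
    rw [hω, hξdef, withDensity_apply _ MeasurableSet.univ, setLIntegral_univ,
      lintegral_indicator (hFmeas M), withDensity_apply _ (hFmeas M)]
  set m0 : ℝ≥0∞ := ξ (F M) with hm0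
  have hm0pos : 0 < m0 := hM
  have hωlefin : ∀ s, ω s ≤ Mb * μ s := by
    intro s
    have := hω_le s
    simpa using this
  have hm0top : m0 ≠ ⊤ := by
    have h := ne_top_of_le_ne_top (ENNReal.mul_ne_top hMbtop (measure_ne_top μ _))
      (hωlefin Set.univ)
    rw [hωuniv] at h
    exact h
  have hωFc : ω ((F M)ᶜ) = 0 := by
    rw [hω, withDensity_apply _ (hFmeas M).compl]
    have : ∀ x ∈ (F M)ᶜ, (F M).indicator f x = 0 := fun x hx =>
      Set.indicator_of_notMem hx _
    rw [setLIntegral_congr_fun (hFmeas M).compl this]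
    simp
  -- find a compact subset of `F M` with positive ω-measure
  have hδ0 : (0:ℝ≥0∞) < m0 / (2 * Mb) :=
    ENNReal.div_pos hm0pos.ne' (ENNReal.mul_ne_top (by norm_num) hMbtop)
  obtain ⟨C, U, hCcpt, _, hCF, hFU, hμUC⟩ := hreg (F M) (hFmeas M) _ hδ0
  have hωFC : ω (F M \ C) < m0 / 2 := by
    have h1 : ω (F M \ C) ≤ Mb * μ (U \ C) :=
      le_trans (measure_mono (Set.diff_subset_diff_left hFU)) (hωlefin _)
    refine lt_of_le_of_lt h1 ?_
    calc Mb * μ (U \ C) < Mb * (m0 / (2 * Mb)) := by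
          rw [ENNReal.mul_lt_mul_iff_right hMb0 hMbtop]; exact hμUC
      _ ≤ m0 / 2 := by
          have hdd : m0 / (2 * Mb) = m0 / 2 / Mb := by
            rw [div_eq_mul_inv, div_eq_mul_inv, div_eq_mul_inv,
              ENNReal.mul_inv (Or.inl (by norm_num)) (Or.inl (by norm_num)), mul_assoc]
          rw [hdd]
          exact ENNReal.mul_div_le
  have hωC : 0 < ω C := by
    by_contra hcon
    push_neg at hcon
    have hC0 : ω C = 0 := le_antisymm hcon zero_le
    have h2 : m0 ≤ ω (F M) := by
      rw [← hωuniv]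
      calc ω Set.univ ≤ ω (F M) + ω ((F M)ᶜ) :=
            le_trans (measure_mono (by simp)) (measure_union_le _ _)
        _ = ω (F M) := by rw [hωFc, add_zero]
    have h3 : ω (F M) ≤ ω C + ω (F M \ C) := by
      refine le_trans (measure_mono ?_) (measure_union_le _ _)
      intro x hx
      by_cases hxC : x ∈ C
      · exact Or.inl hxC
      · exact Or.inr ⟨hx, hxC⟩
    have hcontr : m0 < m0 := by
      refine lt_of_le_of_lt (le_trans h2 h3) ?_
      rw [hC0, zero_add]
      exact lt_trans hωFC (ENNReal.half_lt_self hm0pos.ne' hm0top)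
    exact lt_irrefl _ hcontr
  -- separate C from its translate by open sets
  have hfix : ∀ x : PontryaginDual G, τ x ≠ x := by
    intro x hx
    exact hl1 (by
      have : l * x = 1 * x := by rw [one_mul]; exact hx
      exact mul_right_cancel this)
  have hsep : ∀ x : PontryaginDual G, ∃ V : Set (PontryaginDual G),
      IsOpen V ∧ x ∈ V ∧ Disjoint V (τ ⁻¹' V) := by
    intro x
    obtain ⟨W1, W2, hW1, hW2, hxW1, hτxW2, hdisj⟩ := t2_separation (hfix x).symm
    refine ⟨W1 ∩ τ ⁻¹' W2, hW1.inter (hW2.preimage hτc), ⟨hxW1, hτxW2⟩, ?_⟩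
    rw [Set.disjoint_left]
    rintro z ⟨hz1, hz2⟩ hz3
    have hτz1 : τ z ∈ W1 := (Set.mem_preimage.mp hz3).1
    exact (Set.disjoint_left.mp hdisj hτz1) hz2
  choose V hVopen hVmem hVdisj using hsep
  obtain ⟨t, ht⟩ := hCcpt.elim_finite_subcover V hVopen
    (fun x hx => Set.mem_iUnion.mpr ⟨x, hVmem x⟩)
  have hexE : ∃ x ∈ t, 0 < ω (V x) := by
    by_contra hcon
    push_neg at hcon
    have h0 : ω C = 0 := by
      refine le_antisymm ?_ zero_le
      calc ω C ≤ ω (⋃ x ∈ t, V x) := measure_mono ht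
        _ ≤ ∑ x ∈ t, ω (V x) := measure_biUnion_finset_le t V
        _ = 0 := Finset.sum_eq_zero fun x hx =>
            le_antisymm (hcon x hx) zero_le
    exact hωC.ne' h0
  obtain ⟨x0, _, hEω⟩ := hexE
  set E : Set (PontryaginDual G) := V x0 with hE
  have hEopen : IsOpen E := hVopen x0
  have hEdisj : Disjoint E (τ ⁻¹' E) := hVdisj x0
  have hEmeas : MeasurableSet E := hEopen.measurableSet
  set m1 : ℝ≥0∞ := ω E with hm1
  have hm1pos : 0 < m1 := hEω
  have hm1top : m1 ≠ ⊤ :=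
    ne_top_of_le_ne_top (ENNReal.mul_ne_top hMbtop (measure_ne_top μ _)) (hωlefin E)
  -- apply density to the indicator of E
  set g : PontryaginDual G → ℂ := E.indicator (fun _ => (1:ℂ)) with hgdef
  have hgmeas : Measurable g := measurable_const.indicator hEmeas
  have hgint : (∫⁻ x, (‖g x‖₊ : ℝ≥0∞) ^ α ∂μ) < ⊤ := by
    refine lt_of_le_of_lt (lintegral_mono (fun x => ?_)) (?_ : ∫⁻ _, 1 ∂μ < ⊤)
    · by_cases hx : x ∈ E
      · rw [hgdef]
        simp only [Set.indicator_of_mem hx]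
        simp
      · rw [hgdef]
        simp only [Set.indicator_of_notMem hx]
        simp [ENNReal.zero_rpow_of_pos hα]
    · rw [lintegral_one]
      exact measure_lt_top μ _
  set Kc : ℝ≥0∞ := (2:ℝ≥0∞) ^ α * (Mb + 1) with hKc
  have hKc0 : Kc ≠ 0 :=
    mul_ne_zero (ennreal_two_rpow_ne_zero hα) (by simp [hMb])
  have hKctop : Kc ≠ ⊤ :=
    ENNReal.mul_ne_top (ennreal_two_rpow_ne_top hα) (ENNReal.add_ne_top.mpr ⟨hMbtop, by norm_num⟩)
  have hε₀ : (0:ℝ≥0∞) < (m1 / 2) / Kc :=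
    ENNReal.div_pos (ENNReal.div_pos hm1pos.ne' (by norm_num)).ne' hKctop
  obtain ⟨p, hp, hI⟩ := hdense g hgmeas hgint _ hε₀
  set I : ℝ≥0∞ := ∫⁻ x, (‖g x - p x‖₊ : ℝ≥0∞) ^ α ∂μ with hIdef
  have hpmeas : Measurable p := (trigPoly_continuous hp).measurable
  have hintmeas : Measurable fun x => (‖g x - p x‖₊ : ℝ≥0∞) ^ α :=
    (hgmeas.sub hpmeas).nnnorm.coe_nnreal_ennreal.pow_const α
  have hpnormmeas : Measurable fun x => (‖p x‖₊ : ℝ≥0∞) ^ α :=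
    hpmeas.nnnorm.coe_nnreal_ennreal.pow_const α
  -- A: the ω-integral over E of ‖g - p‖^α
  set A : ℝ≥0∞ := ∫⁻ x in E, (‖g x - p x‖₊ : ℝ≥0∞) ^ α ∂ω with hAdef
  set B : ℝ≥0∞ := ∫⁻ x in E, (‖p x‖₊ : ℝ≥0∞) ^ α ∂ω with hBdef
  have hA : A ≤ Mb * I := by
    calc A ≤ ∫⁻ x, (‖g x - p x‖₊ : ℝ≥0∞) ^ α ∂(Mb • μ) :=
          lintegral_mono' (le_trans (Measure.restrict_mono (le_refl E).subset hω_le)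
            Measure.restrict_le_self) (le_refl _)
      _ = Mb * I := lintegral_smul_measure _ _
  have hB : B ≤ I := by
    have hstep1 : B ≤ ∫⁻ x in E, (‖p x‖₊ : ℝ≥0∞) ^ α ∂ν :=
      lintegral_mono' (Measure.restrict_mono (le_refl E).subset hω_le_ν) (le_refl _)
    have hstep2 : (∫⁻ x in E, (‖p x‖₊ : ℝ≥0∞) ^ α ∂ν) =
        ∫⁻ x in τ ⁻¹' E, (‖p x‖₊ : ℝ≥0∞) ^ α ∂μ := by
      rw [← lintegral_indicator hEmeas, hν,
        lintegral_map (hpnormmeas.indicator hEmeas) hτm,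
        ← lintegral_indicator (hτm hEmeas)]
      refine lintegral_congr fun x => ?_
      by_cases hx : τ x ∈ E
      · rw [Set.indicator_of_mem hx, Set.indicator_of_mem (Set.mem_preimage.mpr hx)]
        have hinv : p (τ x) = p x := trigPoly_invariant hp hl x
        rw [hinv]
      · rw [Set.indicator_of_notMem hx,
          Set.indicator_of_notMem (fun hc => hx (Set.mem_preimage.mp hc))]
    have hstep3 : (∫⁻ x in τ ⁻¹' E, (‖p x‖₊ : ℝ≥0∞) ^ α ∂μ) =
        ∫⁻ x in τ ⁻¹' E, (‖g x - p x‖₊ : ℝ≥0∞) ^ α ∂μ := by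
      refine setLIntegral_congr_fun (hτm hEmeas)
        (fun x hx => ?_)
      have hxE : x ∉ E := Set.disjoint_right.mp hEdisj hx
      have hgx : g x = 0 := Set.indicator_of_notMem hxE _
      rw [hgx, zero_sub, nnnorm_neg]
    calc B ≤ ∫⁻ x in E, (‖p x‖₊ : ℝ≥0∞) ^ α ∂ν := hstep1
      _ = ∫⁻ x in τ ⁻¹' E, (‖g x - p x‖₊ : ℝ≥0∞) ^ α ∂μ := by rw [hstep2, hstep3]
      _ ≤ I := lintegral_mono' Measure.restrict_le_self (le_refl _)
  -- lower bound: m1 ≤ 2^α * (A + B)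
  have hlow : m1 ≤ (2:ℝ≥0∞) ^ α * (A + B) := by
    have hpt : ∀ x ∈ E, (1:ℝ≥0∞) ≤
        (2:ℝ≥0∞) ^ α * ((‖g x - p x‖₊ : ℝ≥0∞) ^ α + (‖p x‖₊ : ℝ≥0∞) ^ α) := by
      intro x hx
      have hgx : g x = 1 := Set.indicator_of_mem hx _
      have htri : (1:ℝ≥0∞) ≤ (‖g x - p x‖₊ : ℝ≥0∞) + (‖p x‖₊ : ℝ≥0∞) := by
        have h1 : ‖g x‖₊ ≤ ‖g x - p x‖₊ + ‖p x‖₊ := by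
          calc ‖g x‖₊ = ‖(g x - p x) + p x‖₊ := by ring_nf
            _ ≤ ‖g x - p x‖₊ + ‖p x‖₊ := nnnorm_add_le _ _
        have h2 : ‖g x‖₊ = 1 := by rw [hgx]; simp
        rw [h2] at h1
        exact_mod_cast h1
      calc (1:ℝ≥0∞) = (1:ℝ≥0∞) ^ α := (ENNReal.one_rpow α).symm
        _ ≤ ((‖g x - p x‖₊ : ℝ≥0∞) + (‖p x‖₊ : ℝ≥0∞)) ^ α :=
            ENNReal.rpow_le_rpow htri hα.le
        _ ≤ (2:ℝ≥0∞) ^ α * ((‖g x - p x‖₊ : ℝ≥0∞) ^ α + (‖p x‖₊ : ℝ≥0∞) ^ α) :=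
            rpow_add_le_two_rpow _ _ hα
    calc m1 = ∫⁻ _ in E, (1:ℝ≥0∞) ∂ω := by rw [setLIntegral_one]
      _ ≤ ∫⁻ x in E, (2:ℝ≥0∞) ^ α *
            ((‖g x - p x‖₊ : ℝ≥0∞) ^ α + (‖p x‖₊ : ℝ≥0∞) ^ α) ∂ω := by
          refine setLIntegral_mono
            (((hintmeas.add hpnormmeas).const_mul _)) hpt
      _ = (2:ℝ≥0∞) ^ α * (A + B) := by
          rw [lintegral_const_mul' _ _ (ennreal_two_rpow_ne_top hα),
            lintegral_add_left hintmeas]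
  -- contradiction
  have hfinal : m1 < m1 := by
    calc m1 ≤ (2:ℝ≥0∞) ^ α * (A + B) := hlow
      _ ≤ (2:ℝ≥0∞) ^ α * (Mb * I + I) := by
          exact mul_le_mul_right (add_le_add hA hB) _
      _ = Kc * I := by rw [hKc]; ring
      _ < Kc * ((m1 / 2) / Kc) := by
          rw [ENNReal.mul_lt_mul_iff_right hKc0 hKctop]; exact hI
      _ ≤ m1 / 2 := ENNReal.mul_div_le
      _ < m1 := ENNReal.half_lt_self hm1pos.ne' hm1top
  exact lt_irrefl _ hfinal

/-- Necessity: density implies concentration on a transversal. -/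
lemma necessity {H : Subgroup G}
    (hcount : ((annihilator H : Subgroup (PontryaginDual G)) :
      Set (PontryaginDual G)).Countable)
    {μ : Measure (PontryaginDual G)} [IsFiniteMeasure μ] (hreg : PaperRegular μ)
    {α : ℝ} (hα : 0 < α) (hdense : DenseInLp μ α (trigPoly H)) :
    ConcOnTransversal (annihilator H) μ := by
  have key : ∀ l : PontryaginDual G, l ∈ annihilator H → l ≠ 1 →
      ∃ Dl : Set (PontryaginDual G), MeasurableSet Dl ∧ μ Dlᶜ = 0 ∧
        ∀ x ∈ Dl, l * x ∉ Dl := by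
    intro l hl hl1
    have hτm : Measurable fun γ : PontryaginDual G => l * γ :=
      (continuous_const.mul continuous_id).measurable
    obtain ⟨s, hs, hμs, hνs⟩ := sing_of_dense hreg hα hdense hl hl1
    rw [Measure.map_apply hτm hs.compl] at hνs
    refine ⟨sᶜ ∩ (fun γ => l * γ) ⁻¹' s, hs.compl.inter (hτm hs), ?_, ?_⟩
    · have hsub : (sᶜ ∩ (fun γ => l * γ) ⁻¹' s)ᶜ ⊆
          s ∪ (fun γ : PontryaginDual G => l * γ) ⁻¹' sᶜ := by
        intro x hx
        rw [Set.mem_compl_iff, Set.mem_inter_iff, not_and_or] at hx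
        rcases hx with hx | hx
        · exact Or.inl (by simpa using hx)
        · exact Or.inr (by simpa using hx)
      refine le_antisymm (le_trans (measure_mono hsub) ?_) zero_le
      refine le_trans (measure_union_le _ _) ?_
      rw [hμs, hνs, add_zero]
    · rintro x ⟨hx1, hx2⟩ ⟨hx3, _⟩
      exact hx3 hx2
  choose! Dl hDlm hDlnull hDlprop using key
  set S : Set (PontryaginDual G) := ((annihilator H : Subgroup (PontryaginDual G)) :
    Set (PontryaginDual G)) \ {1} with hS
  have hScnt : S.Countable := hcount.mono Set.diff_subset
  refine ⟨⋂ l ∈ S, Dl l, MeasurableSet.biInter hScnt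
    (fun l hlS => hDlm l hlS.1 hlS.2), ?_, ?_⟩
  · rw [Set.compl_iInter₂]
    rw [measure_biUnion_null_iff hScnt]
    exact fun l hlS => hDlnull l hlS.1 hlS.2
  · intro l hl hl1
    rw [Set.eq_empty_iff_forall_notMem]
    rintro x ⟨hxD, ⟨y, hyD, rfl⟩⟩
    have hlS : l ∈ S := ⟨hl, hl1⟩
    have hyDl : y ∈ Dl l := Set.biInter_subset_of_mem hlS hyD
    have hxDl : l * y ∈ Dl l := Set.biInter_subset_of_mem hlS hxD
    exact hDlprop l hl hl1 y hyDl hxDl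

end Nec

end DIT

/-- Theorem 4.5: if the annihilator Λ of H is countable, μ is a regular
finite Borel measure on the dual group Γ of G and α ∈ (0,∞), then the trigonometric
H-polynomials are dense in L^α(μ) if and only if μ is concentrated on a transversal. -/
theorem dense_iff_transversal_countable
    (H : Subgroup G) (hH : IsClosed (H : Set G))
    (hcount : (annihilator H : Set (PontryaginDual G)).Countable)
    [MeasurableSpace (PontryaginDual G)] [BorelSpace (PontryaginDual G)]
    (μ : Measure (PontryaginDual G)) [IsFiniteMeasure μ] (hreg : PaperRegular μ)
    (α : ℝ) (hα : 0 < α) :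
    DenseInLp μ α (trigPoly H) ↔ ConcOnTransversal (annihilator H) μ := by
  constructor
  · intro hdense
    exact DIT.necessity hcount hreg hα hdense
  · intro hconc
    exact DIT.sufficiency hreg hα hconc
end
end
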